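/- arXiv:2307.07716 — 9 statements merged into one kernel-verified Lean document; each statement's English description precedes it below -/
import Mathlib

section
/- Let A be a finite poset with N elements, Ξ_N = {ξ_1 < ... < ξ_N} a linearly ordered set of N elements, and B = {β_1,...,β_n} ⊆ A with β_1 ≺ β_2 ≺ ... ≺ β_n a chain. For each k let Π_k = {α ∈ A : α ⪯ β_k}. Then the minimum of Σ_{k=1}^n f(β_k) over all non-decreasing bijections f : A → Ξ_N (with values summed in an ordered commutative monoid) equals Σ_{k=1}^n ξ_{|Π_k|}. -/
open Finset

/-- If `β 0 ≺ β 1 ≺ ⋯ ≺ β (n-1)` is a chain in a finite poset `A` with `N` elements, then the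
minimum of `∑ k, f (β k)` over all non-decreasing bijections `f : A → Ξ_N = {ξ 1 < ⋯ < ξ N}`
equals `∑ k, ξ |Π_k|`, where `Π_k = {α : α ⪯ β k}`. -/
theorem min_sum_over_chain
    {A : Type*} [PartialOrder A] [Fintype A]
    {Ξ : Type*} [AddCommMonoid Ξ] [LinearOrder Ξ] [IsOrderedCancelAddMonoid Ξ]
    (N : ℕ) (hA : Fintype.card A = N) (ξ : ℕ → Ξ)
    (hξ : ∀ i j, 1 ≤ i → i < j → j ≤ N → ξ i < ξ j)
    (n : ℕ) (β : Fin n → A) (hchain : ∀ k l : Fin n, k < l → β k < β l) :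
    IsLeast
      {S : Ξ | ∃ f : A → Ξ, Monotone f ∧ Function.Injective f ∧
        Set.range f = ξ '' Set.Icc 1 N ∧ S = ∑ k : Fin n, f (β k)}
      (∑ k : Fin n, ξ ({α : A | α ≤ β k}.ncard)) := by
  classical
  -- `ξ` is "injective-on" and "monotone-on" `[1, N]`
  have hξinj : ∀ i j, 1 ≤ i → i ≤ N → 1 ≤ j → j ≤ N → ξ i = ξ j → i = j := by
    intro i j hi hiN hj hjN hij
    rcases lt_trichotomy i j with h | h | h
    · exact absurd hij (ne_of_lt (hξ i j hi h hjN))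
    · exact h
    · exact absurd hij.symm (ne_of_lt (hξ j i hj h hiN))
  have hξmono : ∀ i j, 1 ≤ i → i ≤ j → j ≤ N → ξ i ≤ ξ j := by
    intro i j hi hij hjN
    rcases eq_or_lt_of_le hij with h | h
    · exact le_of_eq (congrArg ξ h)
    · exact le_of_lt (hξ i j hi h hjN)
  -- the cardinality of `Π_k` as a finset card
  have hncard : ∀ k : Fin n,
      ({α : A | α ≤ β k}.ncard) = (univ.filter fun x : A => x ≤ β k).card := by
    intro k
    rw [show {α : A | α ≤ β k} = ↑(univ.filter fun x : A => x ≤ β k) by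
      ext x; simp]
    exact Set.ncard_coe_finset _
  have hcard1 : ∀ k : Fin n, 1 ≤ (univ.filter fun x : A => x ≤ β k).card := by
    intro k
    exact Finset.card_pos.mpr ⟨β k, by simp⟩
  have hcardN : ∀ k : Fin n, (univ.filter fun x : A => x ≤ β k).card ≤ N := by
    intro k
    calc (univ.filter fun x : A => x ≤ β k).card ≤ (univ : Finset A).card :=
          Finset.card_filter_le _ _
      _ = N := hA
  constructor
  · -- Membership: construct the optimal monotone bijection.
    -- rank function: least k with x ≤ β k (or n if none)
    have ex : ∀ α : A, ∃ k : ℕ, k = n ∨ ∃ h : k < n, α ≤ β ⟨k, h⟩ := fun α => ⟨n, Or.inl rfl⟩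
    set r : A → ℕ := fun α => Nat.find (ex α) with hr
    have hr_le : ∀ α, r α ≤ n := fun α => Nat.find_min' (ex α) (Or.inl rfl)
    have hr_spec : ∀ α, ∀ h : r α < n, α ≤ β ⟨r α, h⟩ := by
      intro α h
      rcases Nat.find_spec (ex α) with h' | ⟨h1, h2⟩
      · have hn : r α = n := h'
        omega
      · exact h2
    have hr_min : ∀ (α : A) (k : Fin n), α ≤ β k → r α ≤ k := by
      intro α k hk
      exact Nat.find_min' (ex α) (Or.inr ⟨k.isLt, by simpa using hk⟩)
    have hrβ : ∀ k : Fin n, r (β k) = k := by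
      intro k
      refine le_antisymm (hr_min _ k le_rfl) ?_
      by_contra h
      push_neg at h
      have hlt : r (β k) < n := lt_trans h k.isLt
      have h1 := hr_spec (β k) hlt
      have h2 : β ⟨r (β k), hlt⟩ < β k := hchain _ k h
      exact absurd (lt_of_le_of_lt h1 h2) (lt_irrefl _)
    have hrmono : ∀ a b : A, a ≤ b → r a ≤ r b := by
      intro a b hab
      rcases lt_or_ge (r b) n with h | h
      · exact hr_min a ⟨r b, h⟩ (le_trans hab (hr_spec b h))
      · exact le_trans (hr_le a) h
    -- lexicographic key
    set tL : A → LinearExtension A := fun a => toLinearExtension a with htL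
    have tLinj : Function.Injective tL := fun a b h => h
    have tLmono : ∀ a b : A, a ≤ b → tL a ≤ tL b := fun a b h => toLinearExtension.monotone h
    set key : A → ℕ ×ₗ (LinearExtension A) := fun α => toLex (r α, tL α) with hkey
    have hkeymono : ∀ a b : A, a ≤ b → key a ≤ key b := by
      intro a b hab
      refine Prod.Lex.le_iff.mpr ?_
      rcases eq_or_lt_of_le (hrmono a b hab) with h | h
      · exact Or.inr ⟨h, tLmono a b hab⟩
      · exact Or.inl h
    have hkeyinj : Function.Injective key := by
      intro a b hab
      have : (r a, tL a) = (r b, tL b) := toLex.injective hab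
      exact tLinj (congrArg Prod.snd this)
    have hkeyβ : ∀ (k : Fin n) (x : A), key x ≤ key (β k) ↔ x ≤ β k := by
      intro k x
      constructor
      · intro h
        rcases Prod.Lex.le_iff.mp h with h | ⟨h, _⟩
        · change r x < r (β k) at h
          simp only [hrβ] at h
          have hlt : r x < n := lt_trans h k.isLt
          have h1 := hr_spec x hlt
          have h2 : β ⟨r x, hlt⟩ < β k := hchain _ k h
          exact le_of_lt (lt_of_le_of_lt h1 h2)
        · change r x = r (β k) at h
          simp only [hrβ] at h
          have hlt : r x < n := h ▸ k.isLt
          have h1 := hr_spec x hlt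
          have : (⟨r x, hlt⟩ : Fin n) = k := Fin.ext h
          exact this ▸ h1
      · exact hkeymono x (β k)
    -- position function
    set pos : A → ℕ := fun α => (univ.filter fun x : A => key x ≤ key α).card with hpos
    have hposstrict : ∀ a b : A, key a < key b → pos a < pos b := by
      intro a b hab
      refine Finset.card_lt_card ?_
      constructor
      · intro x hx
        simp only [Finset.mem_filter, Finset.mem_univ, true_and] at hx ⊢
        exact le_trans hx (le_of_lt hab)
      · intro hsub
        have hb : b ∈ univ.filter fun x : A => key x ≤ key b := by simp
        have := hsub hb
        simp only [Finset.mem_filter, Finset.mem_univ, true_and] at this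
        exact absurd this (not_le_of_gt hab)
    have hposmono : ∀ a b : A, key a ≤ key b → pos a ≤ pos b := by
      intro a b hab
      refine Finset.card_le_card ?_
      intro x hx
      simp only [Finset.mem_filter, Finset.mem_univ, true_and] at hx ⊢
      exact le_trans hx hab
    have hposinj : Function.Injective pos := by
      intro a b hab
      by_contra hne
      rcases lt_or_gt_of_ne (fun h : key a = key b => hne (hkeyinj h)) with h | h
      · exact absurd hab (ne_of_lt (hposstrict a b h))
      · exact absurd hab.symm (ne_of_lt (hposstrict b a h))
    have hpos1 : ∀ α : A, 1 ≤ pos α := by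
      intro α
      exact Finset.card_pos.mpr ⟨α, by simp⟩
    have hposN : ∀ α : A, pos α ≤ N := by
      intro α
      calc (univ.filter fun x : A => key x ≤ key α).card ≤ (univ : Finset A).card :=
            Finset.card_filter_le _ _
        _ = N := hA
    have himg : Finset.image pos univ = Finset.Icc 1 N := by
      refine Finset.eq_of_subset_of_card_le ?_ ?_
      · intro m hm
        simp only [Finset.mem_image] at hm
        obtain ⟨a, _, rfl⟩ := hm
        exact Finset.mem_Icc.mpr ⟨hpos1 a, hposN a⟩
      · rw [Finset.card_image_of_injective _ hposinj, Nat.card_Icc, Finset.card_univ, hA]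
        omega
    have hrangepos : Set.range pos = Set.Icc 1 N := by
      ext m
      constructor
      · rintro ⟨a, rfl⟩
        exact ⟨hpos1 a, hposN a⟩
      · intro hm
        have : m ∈ Finset.image pos univ := by
          rw [himg]; exact Finset.mem_Icc.mpr ⟨hm.1, hm.2⟩
        simp only [Finset.mem_image] at this
        obtain ⟨a, _, rfl⟩ := this
        exact ⟨a, rfl⟩
    have hposβ : ∀ k : Fin n, pos (β k) = (univ.filter fun x : A => x ≤ β k).card := by
      intro k
      have hfeq : (univ.filter fun x : A => key x ≤ key (β k))
          = (univ.filter fun x : A => x ≤ β k) := by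
        ext x
        simp only [Finset.mem_filter, Finset.mem_univ, true_and]
        exact hkeyβ k x
      show (univ.filter fun x : A => key x ≤ key (β k)).card = _
      rw [hfeq]
    refine ⟨fun α => ξ (pos α), ?_, ?_, ?_, ?_⟩
    · intro a b hab
      exact hξmono _ _ (hpos1 a) (hposmono a b (hkeymono a b hab)) (hposN b)
    · intro a b hab
      exact hposinj (hξinj _ _ (hpos1 a) (hposN a) (hpos1 b) (hposN b) hab)
    · rw [show (fun α => ξ (pos α)) = ξ ∘ pos from rfl, Set.range_comp, hrangepos]
    · refine Finset.sum_congr rfl fun k _ => ?_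
      rw [hncard k, ← hposβ k]
  · -- Lower bound.
    rintro S ⟨f, hfm, hfi, hfr, rfl⟩
    have hrange : ∀ α : A, ∃ j, 1 ≤ j ∧ j ≤ N ∧ ξ j = f α := by
      intro α
      have : f α ∈ ξ '' Set.Icc 1 N := hfr ▸ Set.mem_range_self α
      obtain ⟨j, hj, hje⟩ := this
      exact ⟨j, hj.1, hj.2, hje⟩
    choose g hg1 hgN hgξ using hrange
    refine Finset.sum_le_sum fun k _ => ?_
    have hc : ({α : A | α ≤ β k}.ncard) ≤ g (β k) := by
      rw [hncard k]
      calc (univ.filter fun x : A => x ≤ β k).card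
          ≤ (Finset.Icc 1 (g (β k))).card := by
            refine Finset.card_le_card_of_injOn g ?_ ?_
            · intro a ha
              simp only [Finset.mem_coe, Finset.mem_filter, Finset.mem_univ, true_and] at ha
              refine Finset.mem_Icc.mpr ⟨hg1 a, ?_⟩
              by_contra h
              push_neg at h
              have h1 : ξ (g (β k)) < ξ (g a) := hξ _ _ (hg1 (β k)) h (hgN a)
              rw [hgξ, hgξ] at h1
              exact absurd (hfm ha) (not_le_of_gt h1)
            · intro a _ b _ hab
              exact hfi (by rw [← hgξ a, ← hgξ b, hab])
        _ = g (β k) := by rw [Nat.card_Icc]; omega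
    calc ξ ({α : A | α ≤ β k}.ncard) ≤ ξ (g (β k)) := by
          refine hξmono _ _ ?_ hc (hgN (β k))
          rw [hncard k]; exact hcard1 k
      _ = f (β k) := hgξ (β k)
end

section
/- Let A be a finite poset with N elements, Ξ_N = {ξ_1 < ... < ξ_N}, and B = {β_1,...,β_n} ⊆ A a chain with β_1 ≺ ... ≺ β_n. For each k let Π^k = {α ∈ A : β_k ⪯ α}. Then the maximum of Σ_{k=1}^n f(β_k) over all non-decreasing bijections f : A → Ξ_N equals Σ_{k=1}^n ξ_{N - |Π^k| + 1}. -/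
open Finset

lemma exists_strictMono_nat_aux (A : Type*) [PartialOrder A] [Fintype A] :
    ∃ t : A → ℕ, (∀ a b : A, a < b → t a < t b) ∧ Function.Injective t ∧
      ∀ a, t a < Fintype.card A := by
  classical
  letI : Fintype (LinearExtension A) := ‹Fintype A›
  let e := (monoEquivOfFin (LinearExtension A) (rfl : Fintype.card (LinearExtension A) = Fintype.card A)).symm
  refine ⟨fun a => (e (toLinearExtension a)).val, ?_, ?_, fun a => (e (toLinearExtension a)).isLt⟩
  swap
  · intro a b h
    have h1 : e (toLinearExtension a) = e (toLinearExtension b) := Fin.ext h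
    have h2 : toLinearExtension a = toLinearExtension b := e.injective h1
    exact congrArg (fun x : LinearExtension A => (x : A)) h2
  intro a b hab
  have h1 : toLinearExtension a ≤ toLinearExtension b := toLinearExtension.monotone hab.le
  have h2 : toLinearExtension a ≠ toLinearExtension b := by
    intro h
    exact absurd (congrArg (fun x : LinearExtension A => (x : A)) h) hab.ne
  exact e.strictMono (lt_of_le_of_ne h1 h2)

/-- If `β 0 ≺ β 1 ≺ ⋯ ≺ β (n-1)` is a chain in a finite poset `A` with `N` elements, then the
maximum of `∑ k, f (β k)` over all non-decreasing bijections `f : A → Ξ_N = {ξ 1 < ⋯ < ξ N}`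
equals `∑ k, ξ (N - |Π^k| + 1)`, where `Π^k = {α : β k ⪯ α}`. -/
theorem max_sum_over_chain
    {A : Type*} [PartialOrder A] [Fintype A]
    {Ξ : Type*} [AddCommMonoid Ξ] [LinearOrder Ξ] [IsOrderedCancelAddMonoid Ξ]
    (N : ℕ) (hA : Fintype.card A = N) (ξ : ℕ → Ξ)
    (hξ : ∀ i j, 1 ≤ i → i < j → j ≤ N → ξ i < ξ j)
    (n : ℕ) (β : Fin n → A) (hchain : ∀ k l : Fin n, k < l → β k < β l) :
    IsGreatest
      {S : Ξ | ∃ f : A → Ξ, Monotone f ∧ Function.Injective f ∧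
        Set.range f = ξ '' Set.Icc 1 N ∧ S = ∑ k : Fin n, f (β k)}
      (∑ k : Fin n, ξ (N - ({α : A | β k ≤ α}.ncard) + 1)) := by
  classical
  -- basic facts about the up-sets
  set P : Fin n → Finset A := fun k => univ.filter (fun α => β k ≤ α) with hP
  have hncard : ∀ k, {α : A | β k ≤ α}.ncard = (P k).card := by
    intro k
    rw [Set.ncard_eq_toFinset_card']
    congr 1
    ext α
    simp [hP]
  have hP1 : ∀ k, 1 ≤ (P k).card := by
    intro k
    refine Finset.card_pos.mpr ⟨β k, ?_⟩
    simp [hP]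
  have hPN : ∀ k, (P k).card ≤ N := fun k => hA ▸ Finset.card_le_univ _
  -- monotonicity of ξ on [1, N]
  have hξ_mono : ∀ i j, 1 ≤ i → i ≤ j → j ≤ N → ξ i ≤ ξ j := by
    intro i j h1 hij hj
    rcases eq_or_lt_of_le hij with h | h
    · rw [h]
    · exact (hξ i j h1 h hj).le
  constructor
  · -- membership : construct the optimal f
    -- a linear extension of A into ℕ
    obtain ⟨t, ht_mono, ht_inj, ht_lt⟩ := exists_strictMono_nat_aux A
    rw [hA] at ht_lt
    -- the layer of an element
    set L : A → ℕ := fun α => (univ.filter (fun j : Fin n => β j ≤ α)).card with hL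
    have hL_mono : ∀ a b : A, a ≤ b → L a ≤ L b := by
      intro a b hab
      apply Finset.card_le_card
      intro j hj
      simp only [mem_filter, mem_univ, true_and] at hj ⊢
      exact hj.trans hab
    have hL_le : ∀ (k : Fin n) (γ : A), ¬ β k ≤ γ → L γ ≤ (k : ℕ) := by
      intro k γ hk
      have : (univ.filter (fun j : Fin n => β j ≤ γ)) ⊆
          (univ.filter (fun j : Fin n => (j : ℕ) < (k : ℕ))) := by
        intro j hj
        simp only [mem_filter, mem_univ, true_and] at hj ⊢
        by_contra h
        push_neg at h
        rcases eq_or_lt_of_le h with h' | h'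
        · exact hk (by rwa [show k = j from Fin.ext h'])
        · exact hk ((hchain k j h').le.trans hj)
      calc L γ ≤ (univ.filter (fun j : Fin n => (j : ℕ) < (k : ℕ))).card :=
            Finset.card_le_card this
        _ ≤ (Finset.range (k : ℕ)).card := by
            apply Finset.card_le_card_of_injOn (fun j : Fin n => (j : ℕ))
            · intro j hj
              simp only [mem_coe, mem_filter, mem_univ, true_and] at hj
              simpa using hj
            · intro a _ b _ h
              exact Fin.ext h
        _ = (k : ℕ) := Finset.card_range _
    have hL_ge : ∀ (k : Fin n) (γ : A), β k ≤ γ → (k : ℕ) < L γ := by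
      intro k γ hk
      have hkn : (k : ℕ) < n := k.isLt
      have hcard : (Finset.range ((k : ℕ) + 1)).card ≤
          (univ.filter (fun j : Fin n => β j ≤ γ)).card := by
        apply Finset.card_le_card_of_injOn
          (fun i => if h : i < n then (⟨i, h⟩ : Fin n) else k)
        · intro i hi
          rw [Finset.mem_coe, Finset.mem_range] at hi
          have hin : i < n := by omega
          simp only [dif_pos hin, mem_coe, mem_filter, mem_univ, true_and]
          rcases eq_or_lt_of_le (Nat.lt_succ_iff.mp hi) with h | h
          · have he : (⟨i, hin⟩ : Fin n) = k := Fin.ext h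
            rw [he]; exact hk
          · exact (hchain ⟨i, hin⟩ k h).le.trans hk
        · intro a ha b hb hab
          simp only [Finset.coe_range, Set.mem_Iio] at ha hb
          have ha' : a < n := by omega
          have hb' : b < n := by omega
          simp only [dif_pos ha', dif_pos hb'] at hab
          exact congrArg Fin.val hab
      rw [Finset.card_range] at hcard
      exact lt_of_lt_of_le (Nat.lt_succ_self _) hcard
    -- deal with the degenerate empty case first
    rcases isEmpty_or_nonempty A with hE | hNE
    · have hn : n = 0 := by
        rcases Nat.eq_zero_or_pos n with h | h
        · exact h
        · exact absurd trivial (by simpa using (IsEmpty.false (β ⟨0, h⟩)))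
      subst hn
      have hN0 : N = 0 := by rw [← hA]; simp
      subst hN0
      refine ⟨fun a => (IsEmpty.false a).elim, ?_, ?_, ?_, ?_⟩
      · intro a; exact (IsEmpty.false a).elim
      · intro a; exact (IsEmpty.false a).elim
      · rw [Set.range_eq_empty, Set.Icc_eq_empty (by norm_num), Set.image_empty]
      · simp
    have hN1 : 1 ≤ N := by rw [← hA]; exact Fintype.card_pos
    -- the key : sort first by layer, then by the linear extension
    set key : A → ℕ := fun a => L a * N + t a with hkey
    have hkey_lt : ∀ a b : A, a < b → key a < key b := by
      intro a b hab
      have h1 : L a ≤ L b := hL_mono a b hab.le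
      rcases eq_or_lt_of_le h1 with h | h
      · have ht : t a < t b := ht_mono a b hab
        simp only [hkey]
        rw [h]
        omega
      · calc key a < L a * N + N := Nat.add_lt_add_left (ht_lt a) _
          _ = (L a + 1) * N := by ring
          _ ≤ L b * N := Nat.mul_le_mul_right N h
          _ ≤ key b := Nat.le_add_right _ _
    have hkey_inj : Function.Injective key := by
      intro a b hab
      apply ht_inj
      have ha : t a = key a % N := by
        simp only [hkey]
        rw [Nat.add_comm, Nat.add_mul_mod_self_right, Nat.mod_eq_of_lt (ht_lt a)]
      have hb : t b = key b % N := by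
        simp only [hkey]
        rw [Nat.add_comm, Nat.add_mul_mod_self_right, Nat.mod_eq_of_lt (ht_lt b)]
      rw [ha, hb, hab]
    have hkey_beta : ∀ (k : Fin n) (γ : A), key γ < key (β k) ↔ ¬ β k ≤ γ := by
      intro k γ
      constructor
      · intro h hle
        rcases eq_or_lt_of_le hle with he | hlt
        · rw [he] at h; exact lt_irrefl _ h
        · exact absurd h (not_lt.mpr (hkey_lt _ _ hlt).le)
      · intro h
        have h1 : L γ ≤ (k : ℕ) := hL_le k γ h
        have h2 : (k : ℕ) < L (β k) := hL_ge k (β k) le_rfl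
        calc key γ < L γ * N + N := Nat.add_lt_add_left (ht_lt γ) _
          _ = (L γ + 1) * N := by ring
          _ ≤ ((k : ℕ) + 1) * N := Nat.mul_le_mul_right N (by omega)
          _ ≤ L (β k) * N := Nat.mul_le_mul_right N (by omega)
          _ ≤ key (β k) := Nat.le_add_right _ _
    -- the rank of an element in the `key` ordering
    set rank : A → ℕ := fun a => (univ.filter (fun γ => key γ < key a)).card with hrank
    have hrank_lt : ∀ a b : A, key a < key b → rank a < rank b := by
      intro a b h
      have hsub : (univ.filter (fun γ => key γ < key a)) ⊆
          (univ.filter (fun γ => key γ < key b)) := by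
        intro γ hγ
        simp only [mem_filter, mem_univ, true_and] at hγ ⊢
        exact lt_trans hγ h
      refine Finset.card_lt_card ((Finset.ssubset_iff_of_subset hsub).mpr ⟨a, ?_, ?_⟩)
      · simp [h]
      · simp
    have hrank_ltN : ∀ a : A, rank a < N := by
      intro a
      have hss : (univ.filter (fun γ => key γ < key a)) ⊂ univ := by
        refine Finset.ssubset_univ_iff.mpr ?_
        intro h
        have ha : a ∈ univ.filter (fun γ => key γ < key a) := by
          rw [h]; exact mem_univ a
        simp at ha
      have := Finset.card_lt_card hss
      rwa [card_univ, hA] at this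
    have hrank_inj : Function.Injective rank := by
      intro a b hab
      by_contra hne
      have hk : key a ≠ key b := fun h => hne (hkey_inj h)
      rcases lt_or_gt_of_ne hk with h | h
      · exact absurd hab (Nat.ne_of_lt (hrank_lt a b h))
      · exact absurd hab.symm (Nat.ne_of_lt (hrank_lt b a h))
    have hrank_surj : ∀ m, m < N → ∃ a : A, rank a = m := by
      have hbij : Function.Bijective (fun a => (⟨rank a, hrank_ltN a⟩ : Fin N)) := by
        rw [Fintype.bijective_iff_injective_and_card]
        refine ⟨fun a b h => hrank_inj (congrArg Fin.val h), by simp [hA]⟩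
      intro m hm
      obtain ⟨a, ha⟩ := hbij.2 ⟨m, hm⟩
      exact ⟨a, congrArg Fin.val ha⟩
    -- the optimal assignment
    have hmono : Monotone (fun a => ξ (rank a + 1)) := by
      intro a b hab
      rcases eq_or_lt_of_le hab with rfl | h
      · exact le_refl _
      · have h1 : rank a < rank b := hrank_lt a b (hkey_lt a b h)
        have h2 := hrank_ltN b
        exact (hξ _ _ (by omega) (by omega) (by omega)).le
    have hinj : Function.Injective (fun a => ξ (rank a + 1)) := by
      intro a b hab
      apply hrank_inj
      rcases lt_trichotomy (rank a) (rank b) with h | h | h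
      · have := hξ (rank a + 1) (rank b + 1) (by omega) (by omega)
          (by have := hrank_ltN b; omega)
        exact absurd hab (ne_of_lt this)
      · exact h
      · have := hξ (rank b + 1) (rank a + 1) (by omega) (by omega)
          (by have := hrank_ltN a; omega)
        exact absurd hab.symm (ne_of_lt this)
    have hrange : Set.range (fun a => ξ (rank a + 1)) = ξ '' Set.Icc 1 N := by
      ext x
      constructor
      · rintro ⟨a, rfl⟩
        exact ⟨rank a + 1, ⟨by omega, by have := hrank_ltN a; omega⟩, rfl⟩
      · rintro ⟨m, ⟨h1, h2⟩, rfl⟩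
        obtain ⟨a, ha⟩ := hrank_surj (m - 1) (by omega)
        refine ⟨a, ?_⟩
        show ξ (rank a + 1) = ξ m
        rw [ha]
        congr 1
        omega
    have hrankβ : ∀ k : Fin n, rank (β k) = N - (P k).card := by
      intro k
      have hfe : (univ.filter (fun γ => key γ < key (β k))) = univ \ P k := by
        ext γ
        simp only [mem_filter, mem_univ, true_and, mem_sdiff, hP]
        rw [hkey_beta]
      show (univ.filter (fun γ => key γ < key (β k))).card = N - (P k).card
      rw [hfe, Finset.card_sdiff_of_subset (Finset.subset_univ _), card_univ, hA]
    refine ⟨fun a => ξ (rank a + 1), hmono, hinj, hrange, ?_⟩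
    apply Finset.sum_congr rfl
    intro k _
    rw [hncard k]
    show ξ (N - (P k).card + 1) = ξ (rank (β k) + 1)
    rw [hrankβ k]
  · -- upper bound
    rintro y ⟨f, hmono, hinj, hrange, rfl⟩
    apply Finset.sum_le_sum
    intro k _
    rw [hncard]
    -- choose preimage indices
    have hjex : ∀ α : A, ∃ i, (1 ≤ i ∧ i ≤ N) ∧ ξ i = f α := by
      intro α
      have : f α ∈ Set.range f := ⟨α, rfl⟩
      rw [hrange] at this
      obtain ⟨i, hi, hfi⟩ := this
      exact ⟨i, ⟨hi.1, hi.2⟩, hfi⟩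
    choose j hj1 hj2 using hjex
    set i := j (β k) with hidef
    have hi1 : 1 ≤ i := (hj1 (β k)).1
    have hiN : i ≤ N := (hj1 (β k)).2
    -- every α in P k has index ≥ i
    have hge : ∀ α ∈ P k, i ≤ j α := by
      intro α hα
      simp only [hP, mem_filter, mem_univ, true_and] at hα
      by_contra h
      push_neg at h
      have h1 : ξ (j α) < ξ i := hξ _ _ (hj1 α).1 h hiN
      have h2 : ξ i ≤ ξ (j α) := by
        rw [hj2, hj2]
        exact hmono hα
      exact absurd h2 (not_le.mpr h1)
    -- counting
    have hcount : (P k).card ≤ N + 1 - i := by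
      calc (P k).card ≤ (Finset.Icc i N).card := by
            apply Finset.card_le_card_of_injOn j
            · intro α hα
              simp only [Finset.mem_coe, Finset.mem_Icc]
              exact ⟨hge α hα, (hj1 α).2⟩
            · intro a _ b _ hab
              apply hinj
              rw [← hj2, ← hj2, hab]
        _ = N + 1 - i := Nat.card_Icc i N
    have hile : i ≤ N - (P k).card + 1 := by
      have := hP1 k
      have := hPN k
      omega
    have hub : N - (P k).card + 1 ≤ N := by
      have := hP1 k
      have h0 : 1 ≤ N := le_trans (hP1 k) (hPN k)
      omega
    calc f (β k) = ξ i := (hj2 (β k)).symm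
      _ ≤ ξ (N - (P k).card + 1) := hξ_mono _ _ hi1 hile hub
end

section
/- Let A be a finite poset with N elements, Ξ_N = {ξ_1 < ... < ξ_N}, and B = {β_1,...,β_n} ⊆ A. Suppose the lower sets Π_k = {α ∈ A : α ⪯ β_k} are pairwise disjoint and satisfy |Π_1| ≤ |Π_2| ≤ ... ≤ |Π_n|. Then the minimum of Σ_{k=1}^n f(β_k) over all non-decreasing bijections f : A → Ξ_N equals Σ_{k=1}^n ξ_{|Π_1| + ... + |Π_k|}. -/
private lemma fin_le_apply {m n : ℕ} {ι : Fin m → Fin n} (h : StrictMono ι) (i : Fin m) :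
    (i : ℕ) ≤ (ι i : ℕ) := by
  classical
  have hsub : (Finset.Iic i).image ι ⊆ Finset.Iic (ι i) := by
    intro x hx
    simp only [Finset.mem_image, Finset.mem_Iic] at hx ⊢
    obtain ⟨j, hj, rfl⟩ := hx
    exact h.monotone hj
  have hcard := Finset.card_le_card hsub
  rw [Finset.card_image_of_injective _ h.injective] at hcard
  simpa [Fin.card_Iic] using hcard

private lemma sub_sum {n : ℕ} (w : Fin n → ℕ) (hw : Monotone w) (k : Fin n)
    (T : Finset (Fin n)) (hT : T.card = (k : ℕ) + 1) :
    ∑ j ∈ Finset.Iic k, w j ≤ ∑ j ∈ T, w j := by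
  classical
  have hkn : (k : ℕ) + 1 ≤ n := k.isLt
  set ι : Fin ((k : ℕ) + 1) → Fin n := fun i => T.orderEmbOfFin hT i with hι
  have hιs : StrictMono ι := (T.orderEmbOfFin hT).strictMono
  set κ : Fin ((k : ℕ) + 1) → Fin n := Fin.castLE hkn with hκ
  have h1 : Finset.Iic k = Finset.univ.image κ := by
    ext j
    simp only [Finset.mem_Iic, Finset.mem_image, Finset.mem_univ, true_and]
    constructor
    · intro hj
      exact ⟨⟨(j : ℕ), by omega⟩, by simp [hκ, Fin.ext_iff]⟩
    · rintro ⟨i, rfl⟩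
      simp [hκ, Fin.le_def]
      omega
  have h2 : T = Finset.univ.image ι := by
    apply Finset.coe_injective
    rw [Finset.coe_image, Finset.coe_univ, Set.image_univ, Finset.range_orderEmbOfFin]
  rw [h1, h2, Finset.sum_image (fun a _ b _ h => (Fin.castLE_injective hkn) h),
    Finset.sum_image (fun a _ b _ h => hιs.injective h)]
  apply Finset.sum_le_sum
  intro i _
  apply hw
  rw [Fin.le_def]
  simpa [hκ] using fin_le_apply hιs i

private lemma exists_rank {A : Type*} [PartialOrder A] [Fintype A]
    (N : ℕ) (hA : Fintype.card A = N)
    {n : ℕ} (β : Fin n → A)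
    (hdisj : ∀ k l : Fin n, k ≠ l → Disjoint {α : A | α ≤ β k} {α : A | α ≤ β l}) :
    ∃ g : A → ℕ, (∀ a a' : A, a < a' → g a < g a') ∧ Function.Injective g ∧
      (∀ α, g α ∈ Set.Icc 1 N) ∧ Set.range g = Set.Icc 1 N ∧
      ∀ k : Fin n, g (β k) = ∑ j ∈ Finset.Iic k, {α : A | α ≤ β j}.ncard := by
  classical
  have huniq : ∀ (α : A) (k l : Fin n), α ≤ β k → α ≤ β l → k = l := by
    intro α k l hk hl
    by_contra hne
    exact Set.disjoint_left.mp (hdisj k l hne) hk hl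
  have hncard : ∀ j : Fin n, {α : A | α ≤ β j}.ncard =
      (Finset.univ.filter (fun α => α ≤ β j)).card := by
    intro j
    have : {α : A | α ≤ β j} = ↑(Finset.univ.filter (fun α => α ≤ β j)) := by
      ext α; simp
    rw [this, Set.ncard_coe_finset]
  set b : A → ℕ := fun α => if h : ∃ k : Fin n, α ≤ β k then ((h.choose : Fin n) : ℕ) else n
    with hbdef
  have hb_eq : ∀ (α : A) (k : Fin n), α ≤ β k → b α = (k : ℕ) := by
    intro α k hk
    have h : ∃ k : Fin n, α ≤ β k := ⟨k, hk⟩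
    simp only [hbdef, dif_pos h]
    exact congrArg Fin.val (huniq α h.choose k h.choose_spec hk)
  have hb_inv : ∀ (α : A) (k : Fin n), b α = (k : ℕ) → α ≤ β k := by
    intro α k hk
    by_cases h : ∃ l : Fin n, α ≤ β l
    · obtain ⟨l, hl⟩ := h
      have h1 := hb_eq α l hl
      have h2 : l = k := Fin.ext (by omega)
      exact h2 ▸ hl
    · simp only [hbdef, dif_neg h] at hk
      exact absurd hk (by have := k.isLt; omega)
  set sf : A → ℕ := fun α => if ∃ k : Fin n, α = β k then 1 else 0 with hsdef
  have hs_one : ∀ k : Fin n, sf (β k) = 1 := fun k => if_pos ⟨k, rfl⟩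
  set e : A → LinearExtension A := fun a => toLinearExtension a with hedef
  have hemono : ∀ a a' : A, a ≤ a' → e a ≤ e a' := fun a a' h => toLinearExtension.monotone' h
  have heinj : Function.Injective e := fun a a' h => h
  have hestrict : ∀ a a' : A, a < a' → e a < e a' := fun a a' h =>
    lt_of_le_of_ne (hemono a a' h.le) (fun he => h.ne (heinj he))
  set key : A → ℕ ×ₗ (ℕ ×ₗ LinearExtension A) :=
    fun α => toLex (b α, toLex (sf α, e α)) with hkeydef
  have hkeyinj : Function.Injective key := by
    intro a a' h
    simp only [hkeydef] at h
    have h2 := congrArg (fun p => (ofLex p).2) h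
    have h3 := congrArg (fun p => (ofLex p).2) h2
    exact heinj h3
  have hkeystrict : ∀ a a' : A, a < a' → key a < key a' := by
    intro a a' h
    simp only [hkeydef, Prod.Lex.lt_iff]
    by_cases hex : ∃ k : Fin n, a' ≤ β k
    · obtain ⟨k, hk⟩ := hex
      have hak : a ≤ β k := le_trans h.le hk
      have hba : b a = (k : ℕ) := hb_eq a k hak
      have hba' : b a' = (k : ℕ) := hb_eq a' k hk
      right
      refine ⟨by rw [hba, hba']; rfl, ?_⟩
      have hsa : sf a = 0 := by
        rw [hsdef]
        simp only
        rw [if_neg]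
        rintro ⟨l, rfl⟩
        have : l = k := huniq (β l) l k le_rfl hak
        subst this
        exact absurd (lt_of_lt_of_le h hk) (lt_irrefl _)
      by_cases ha' : a' = β k
      · left
        rw [hsa, ha', hs_one k]
        norm_num
      · have hsa' : sf a' = 0 := by
          rw [hsdef]
          simp only
          rw [if_neg]
          rintro ⟨l, rfl⟩
          exact ha' (by rw [huniq (β l) l k le_rfl hk])
        right
        exact ⟨by rw [hsa, hsa']; rfl, hestrict a a' h⟩
    · have hsa' : sf a' = 0 := by
        rw [hsdef]; simp only; rw [if_neg]
        rintro ⟨l, rfl⟩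
        exact hex ⟨l, le_rfl⟩
      have hba' : b a' = n := by rw [hbdef]; simp only; rw [dif_neg hex]
      by_cases hexa : ∃ k : Fin n, a ≤ β k
      · obtain ⟨k, hk⟩ := hexa
        left
        rw [hb_eq a k hk, hba']
        exact k.isLt
      · have hsa : sf a = 0 := by
          rw [hsdef]; simp only; rw [if_neg]
          rintro ⟨l, rfl⟩
          exact hexa ⟨l, le_rfl⟩
        have hba : b a = n := by rw [hbdef]; simp only; rw [dif_neg hexa]
        right
        refine ⟨by rw [hba, hba']; rfl, ?_⟩
        right
        exact ⟨by rw [hsa, hsa']; rfl, hestrict a a' h⟩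
  set g : A → ℕ := fun α => (Finset.univ.filter (fun γ => key γ ≤ key α)).card with hgdef
  have hgkey : ∀ a a' : A, key a < key a' → g a < g a' := by
    intro a a' hlt
    apply Finset.card_lt_card
    constructor
    · intro γ hγ
      simp only [Finset.mem_filter, Finset.mem_univ, true_and] at hγ ⊢
      exact le_trans hγ hlt.le
    · intro hsub
      have h1 : a' ∈ Finset.univ.filter (fun γ => key γ ≤ key a') :=
        Finset.mem_filter.mpr ⟨Finset.mem_univ _, le_rfl⟩
      have h2 := hsub h1
      simp only [Finset.mem_filter, Finset.mem_univ, true_and] at h2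
      exact absurd h2 (not_le.mpr hlt)
  have hgstrict : ∀ a a' : A, a < a' → g a < g a' := fun a a' h => hgkey a a' (hkeystrict a a' h)
  have hginj : Function.Injective g := by
    intro a a' h
    by_contra hne
    rcases lt_or_gt_of_ne (fun he : key a = key a' => hne (hkeyinj he)) with hlt | hlt
    · exact absurd h (hgkey a a' hlt).ne
    · exact absurd h.symm (hgkey a' a hlt).ne
  have hmem : ∀ α, g α ∈ Set.Icc 1 N := by
    intro α
    constructor
    · rw [hgdef]
      simp only
      rw [Nat.one_le_iff_ne_zero, ← Nat.pos_iff_ne_zero, Finset.card_pos]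
      exact ⟨α, by simp⟩
    · rw [← hA, ← Finset.card_univ]
      exact Finset.card_le_card (Finset.filter_subset _ _)
  have himg : Finset.univ.image g = Finset.Icc 1 N := by
    apply Finset.eq_of_subset_of_card_le
    · intro x hx
      simp only [Finset.mem_image, Finset.mem_univ, true_and] at hx
      obtain ⟨α, rfl⟩ := hx
      rw [Finset.mem_Icc]
      exact ⟨(hmem α).1, (hmem α).2⟩
    · rw [Nat.card_Icc, Finset.card_image_of_injective _ hginj, Finset.card_univ, hA]
      omega
  have hrange : Set.range g = Set.Icc 1 N := by
    rw [← Set.image_univ, ← Finset.coe_univ, ← Finset.coe_image, himg, Finset.coe_Icc]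
  refine ⟨g, hgstrict, hginj, hmem, hrange, ?_⟩
  intro k
  have hfilter : Finset.univ.filter (fun γ => key γ ≤ key (β k)) =
      (Finset.Iic k).biUnion (fun j => Finset.univ.filter (fun α => α ≤ β j)) := by
    ext γ
    simp only [Finset.mem_filter, Finset.mem_univ, true_and, Finset.mem_biUnion, Finset.mem_Iic]
    constructor
    · intro hγ
      simp only [hkeydef, Prod.Lex.le_iff] at hγ
      have hbk : b (β k) = (k : ℕ) := hb_eq (β k) k le_rfl
      rcases hγ with hlt | ⟨heq, _⟩
      · rw [hbk] at hlt
        have hblt : b γ < n := lt_trans hlt k.isLt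
        have hexl : ∃ l : Fin n, γ ≤ β l := by
          by_contra hno
          rw [hbdef] at hblt
          simp only [dif_neg hno] at hblt
          omega
        obtain ⟨l, hl⟩ := hexl
        have hbl := hb_eq γ l hl
        exact ⟨l, by rw [Fin.le_def]; have hlt' : b γ < (k : ℕ) := hlt; omega, hl⟩
      · rw [hbk] at heq
        exact ⟨k, le_rfl, hb_inv γ k heq⟩
    · rintro ⟨j, hjk, hγj⟩
      simp only [hkeydef, Prod.Lex.le_iff]
      have hbγ : b γ = (j : ℕ) := hb_eq γ j hγj
      have hbk : b (β k) = (k : ℕ) := hb_eq (β k) k le_rfl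
      rcases lt_or_eq_of_le hjk with hjlt | rfl
      · left
        rw [hbγ, hbk]
        exact hjlt
      · right
        refine ⟨by rw [hbγ, hbk]; rfl, ?_⟩
        by_cases hγβ : γ = β j
        · subst hγβ
          right
          exact ⟨rfl, le_rfl⟩
        · left
          have hsγ : sf γ = 0 := by
            rw [hsdef]; simp only; rw [if_neg]
            rintro ⟨l, rfl⟩
            exact hγβ (by rw [huniq (β l) l j le_rfl hγj])
          rw [hsγ, hs_one j]
          norm_num
  have hdisjF : ∀ j ∈ Finset.Iic k, ∀ l ∈ Finset.Iic k, j ≠ l →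
      Disjoint (Finset.univ.filter (fun α => α ≤ β j)) (Finset.univ.filter (fun α => α ≤ β l)) := by
    intro j _ l _ hjl
    rw [Finset.disjoint_left]
    intro α hα hα'
    simp only [Finset.mem_filter, Finset.mem_univ, true_and] at hα hα'
    exact Set.disjoint_left.mp (hdisj j l hjl) hα hα'
  rw [hgdef]
  simp only
  rw [hfilter, Finset.card_biUnion hdisjF]
  exact Finset.sum_congr rfl (fun j _ => (hncard j).symm)

/-- If the lower sets `Π_k = {α : α ⪯ β k}` of `β 0, …, β (n-1)` are pairwise disjoint and have
non-decreasing cardinalities, then the minimum of `∑ k, f (β k)` over all non-decreasing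
bijections `f : A → Ξ_N = {ξ 1 < ⋯ < ξ N}` equals `∑ k, ξ (|Π_0| + ⋯ + |Π_k|)`. -/
theorem min_sum_disjoint_lower_sets
    {A : Type*} [PartialOrder A] [Fintype A]
    {Ξ : Type*} [AddCommMonoid Ξ] [LinearOrder Ξ] [IsOrderedCancelAddMonoid Ξ]
    (N : ℕ) (hA : Fintype.card A = N) (ξ : ℕ → Ξ)
    (hξ : ∀ i j, 1 ≤ i → i < j → j ≤ N → ξ i < ξ j)
    (n : ℕ) (β : Fin n → A)
    (hdisj : ∀ k l : Fin n, k ≠ l → Disjoint {α : A | α ≤ β k} {α : A | α ≤ β l})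
    (hcard : ∀ k l : Fin n, k ≤ l → {α : A | α ≤ β k}.ncard ≤ {α : A | α ≤ β l}.ncard) :
    IsLeast
      {S : Ξ | ∃ f : A → Ξ, Monotone f ∧ Function.Injective f ∧
        Set.range f = ξ '' Set.Icc 1 N ∧ S = ∑ k : Fin n, f (β k)}
      (∑ k : Fin n, ξ (∑ j ∈ Finset.Iic k, {α : A | α ≤ β j}.ncard)) := by
  classical
  set w : Fin n → ℕ := fun j => {α : A | α ≤ β j}.ncard with hwdef
  have hwmono : Monotone w := fun j l h => hcard j l h
  set P : Fin n → Finset A := fun j => Finset.univ.filter (fun α => α ≤ β j) with hPdef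
  have hncard : ∀ j : Fin n, w j = (P j).card := by
    intro j
    have h : {α : A | α ≤ β j} = ↑(P j) := by ext α; simp [hPdef]
    rw [hwdef]; simp only; rw [h, Set.ncard_coe_finset]
  have hdisjF : ∀ j l : Fin n, j ≠ l → Disjoint (P j) (P l) := by
    intro j l hjl
    rw [Finset.disjoint_left]
    intro α hα hα'
    simp only [hPdef, Finset.mem_filter, Finset.mem_univ, true_and] at hα hα'
    exact Set.disjoint_left.mp (hdisj j l hjl) hα hα'
  have hβinj : Function.Injective β := by
    intro k l h
    by_contra hne
    exact Set.disjoint_left.mp (hdisj k l hne) (le_refl (β k))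
      (show β k ∈ {α : A | α ≤ β l} from h ▸ le_rfl)
  have hw1 : ∀ j : Fin n, 1 ≤ w j := by
    intro j
    rw [hncard j]
    rw [Nat.one_le_iff_ne_zero, ← Nat.pos_iff_ne_zero, Finset.card_pos]
    exact ⟨β j, by simp [hPdef]⟩
  have hsumT : ∀ T : Finset (Fin n), ∑ j ∈ T, w j = (T.biUnion P).card := by
    intro T
    rw [Finset.card_biUnion (fun j _ l _ h => hdisjF j l h)]
    exact Finset.sum_congr rfl (fun j _ => hncard j)
  have hc1 : ∀ k : Fin n, 1 ≤ ∑ j ∈ Finset.Iic k, w j := fun k =>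
    le_trans (hw1 k) (Finset.single_le_sum (fun j _ => Nat.zero_le (w j))
      (Finset.mem_Iic.mpr le_rfl))
  have hcN : ∀ k : Fin n, ∑ j ∈ Finset.Iic k, w j ≤ N := by
    intro k
    rw [hsumT]
    rw [← hA, ← Finset.card_univ]
    exact Finset.card_le_card (Finset.subset_univ _)
  have hξle : ∀ i j, 1 ≤ i → i ≤ j → j ≤ N → ξ i ≤ ξ j := by
    intro i j h1 h2 h3
    rcases eq_or_lt_of_le h2 with rfl | hlt
    · exact le_rfl
    · exact (hξ i j h1 hlt h3).le
  have hξltrev : ∀ i j, 1 ≤ i → i ≤ N → 1 ≤ j → j ≤ N → ξ i < ξ j → i < j := by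
    intro i j hi1 hiN hj1 hjN h
    by_contra hc
    push_neg at hc
    exact absurd h (not_lt.mpr (hξle j i hj1 hc hiN))
  have hξinjOn : ∀ i j, 1 ≤ i → i ≤ N → 1 ≤ j → j ≤ N → ξ i = ξ j → i = j := by
    intro i j hi1 hiN hj1 hjN h
    rcases lt_trichotomy i j with hlt | heq | hlt
    · exact absurd h (hξ i j hi1 hlt hjN).ne
    · exact heq
    · exact absurd h.symm (hξ j i hj1 hlt hiN).ne
  constructor
  · -- membership
    obtain ⟨g, hgstrict, hginj, hgmem, hgrange, hgβ⟩ := exists_rank N hA β hdisj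
    have hgmono : ∀ a a' : A, a ≤ a' → g a ≤ g a' := by
      intro a a' h
      rcases eq_or_lt_of_le h with rfl | hlt
      · exact le_rfl
      · exact (hgstrict a a' hlt).le
    refine ⟨ξ ∘ g, ?_, ?_, ?_, ?_⟩
    · intro a a' h
      exact hξle _ _ (hgmem a).1 (hgmono a a' h) (hgmem a').2
    · intro a a' h
      exact hginj (hξinjOn _ _ (hgmem a).1 (hgmem a).2 (hgmem a').1 (hgmem a').2 h)
    · rw [Set.range_comp, hgrange]
    · exact (Finset.sum_congr rfl (fun k _ => by
        simp only [Function.comp_apply]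
        rw [hgβ k])).symm
  · -- lower bound
    rintro S ⟨f, hmono, hinj, hrange, rfl⟩
    have hex : ∀ α : A, ∃ m, (1 ≤ m ∧ m ≤ N) ∧ ξ m = f α := by
      intro α
      have h : f α ∈ ξ '' Set.Icc 1 N := hrange ▸ Set.mem_range_self α
      obtain ⟨m, hm, he⟩ := h
      exact ⟨m, ⟨hm.1, hm.2⟩, he⟩
    choose g hgmem hgval using hex
    have hg1 : ∀ α, 1 ≤ g α := fun α => (hgmem α).1
    have hgN : ∀ α, g α ≤ N := fun α => (hgmem α).2
    have hgstrict : ∀ a a' : A, a < a' → g a < g a' := by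
      intro a a' h
      have hf : ξ (g a) < ξ (g a') := by
        rw [hgval a, hgval a']
        exact lt_of_le_of_ne (hmono h.le) (fun he => h.ne (hinj he))
      exact hξltrev _ _ (hg1 a) (hgN a) (hg1 a') (hgN a') hf
    have hgmono : ∀ a a' : A, a ≤ a' → g a ≤ g a' := by
      intro a a' h
      rcases eq_or_lt_of_le h with rfl | hlt
      · exact le_rfl
      · exact (hgstrict a a' hlt).le
    have hginj : Function.Injective g := by
      intro a a' h
      exact hinj (by rw [← hgval a, ← hgval a', h])
    set v : Fin n → ℕ := fun k => g (β k) with hvdef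
    have hvinj : Function.Injective v := fun k l h => hβinj (hginj h)
    set σ := Tuple.sort v with hσdef
    have hmonov : Monotone (v ∘ σ) := Tuple.monotone_sort v
    have hbound : ∀ k : Fin n, (∑ j ∈ Finset.Iic k, w j) ≤ v (σ k) := by
      intro k
      set T : Finset (Fin n) := (Finset.Iic k).image σ with hTdef
      have hTcard : T.card = (k : ℕ) + 1 := by
        rw [hTdef, Finset.card_image_of_injective _ σ.injective, Fin.card_Iic]
      have h1 : ∑ j ∈ Finset.Iic k, w j ≤ ∑ j ∈ T, w j := sub_sum w hwmono k T hTcard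
      have h2 : ∑ j ∈ T, w j ≤ v (σ k) := by
        rw [hsumT T]
        have hle : (T.biUnion P).card ≤ (Finset.Icc 1 (v (σ k))).card := by
          apply Finset.card_le_card_of_injOn g
          · intro α hα
            simp only [hTdef, Finset.mem_coe, Finset.mem_biUnion, Finset.mem_image, Finset.mem_Iic] at hα
            obtain ⟨j, ⟨i, hik, rfl⟩, hαj⟩ := hα
            simp only [hPdef, Finset.mem_filter, Finset.mem_univ, true_and] at hαj
            rw [Finset.mem_coe, Finset.mem_Icc]
            exact ⟨hg1 α, le_trans (hgmono α (β (σ i)) hαj) (hmonov hik)⟩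
          · exact fun a _ b _ h => hginj h
        rw [Nat.card_Icc] at hle
        omega
      exact le_trans h1 h2
    calc ∑ k : Fin n, ξ (∑ j ∈ Finset.Iic k, w j)
        ≤ ∑ k : Fin n, ξ (v (σ k)) := by
          apply Finset.sum_le_sum
          intro k _
          exact hξle _ _ (hc1 k) (hbound k) (hgN (β (σ k)))
      _ = ∑ k : Fin n, ξ (v k) := Equiv.sum_comp σ (fun k => ξ (v k))
      _ = ∑ k : Fin n, f (β k) := Finset.sum_congr rfl (fun k _ => hgval (β k))
end

section
/- Let n ∈ ℕ, let A = {(i,j) : 1 ≤ i,j ≤ n} with the coordinate-wise partial order (i₁,j₁) ⪯ (i₂,j₂) iff i₁ ≤ i₂ and j₁ ≤ j₂, and let Ξ_n = {1/n², 2/n², ..., n²/n²}. Then for every coordinate-wise non-decreasing bijection f : A → Ξ_n and every s with 1 ≤ s ≤ n, one has Σ_{v=1}^n f(s,v) ≥ s(n+1)/(2n). -/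
lemma gauss_sum_rat (n : ℕ) : ∑ i ∈ Finset.range n, ((i:ℚ) + 1) = (n : ℚ) * (n + 1) / 2 := by
  induction n with
  | zero => simp
  | succ k ih =>
    rw [Finset.sum_range_succ, ih]
    push_cast
    ring

/-- For every coordinate-wise non-decreasing bijection `f` from the `n × n` grid onto
`Ξ_n = {k/n² : 1 ≤ k ≤ n²}` and every column `s` (1-indexed value `s.1 + 1`), the column sum
satisfies `∑ v, f (s, v) ≥ s (n+1) / (2n)`. -/
theorem column_sum_lower_bound
    (n : ℕ) (hn : 0 < n) (f : Fin n × Fin n → ℚ)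
    (hmono : Monotone f) (hinj : Function.Injective f)
    (hrange : Set.range f = (fun k : ℕ => (k : ℚ) / (n ^ 2 : ℚ)) '' Set.Icc 1 (n ^ 2))
    (s : Fin n) :
    ((s : ℕ) + 1 : ℚ) * (n + 1) / (2 * n) ≤ ∑ v : Fin n, f (s, v) := by
  have hn2 : (0:ℚ) < (n:ℚ)^2 := by positivity
  -- key pointwise bound
  have key : ∀ p : Fin n × Fin n,
      ((p.1 : ℚ) + 1) * ((p.2 : ℚ) + 1) / (n^2 : ℚ) ≤ f p := by
    intro p
    have hfp : f p ∈ Set.range f := ⟨p, rfl⟩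
    rw [hrange] at hfp
    obtain ⟨m, hm, hfm⟩ := hfp
    obtain ⟨hm1, hm2⟩ := hm
    -- card of Iic p ≤ m
    have hcard : (Finset.Iic p).card ≤ m := by
      have := Finset.card_le_card_of_injOn (f := f) (s := Finset.Iic p)
        (t := (Finset.Icc 1 m).image (fun k : ℕ => (k : ℚ) / (n^2 : ℚ))) ?_ ?_
      · rw [Finset.card_image_of_injective, Nat.card_Icc] at this
        · omega
        · intro a b hab
          field_simp at hab
          exact_mod_cast hab
      · intro q hq
        have hq' : q ≤ p := Finset.mem_Iic.mp hq
        have hfq : f q ∈ Set.range f := ⟨q, rfl⟩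
        rw [hrange] at hfq
        obtain ⟨k, ⟨hk1, hk2⟩, hfk⟩ := hfq
        have hle : f q ≤ f p := hmono hq'
        rw [← hfk, ← hfm] at hle
        have hkm : k ≤ m := by
          have := (div_le_div_iff_of_pos_right hn2).mp hle
          exact_mod_cast this
        rw [Finset.mem_coe, Finset.mem_image]
        exact ⟨k, Finset.mem_Icc.mpr ⟨hk1, hkm⟩, hfk⟩
      · exact fun a _ b _ h => hinj h
    have hcard2 : (Finset.Iic p).card = (p.1 + 1) * (p.2 + 1) := by
      rw [← Finset.Iic_product_Iic, Finset.card_product, Fin.card_Iic, Fin.card_Iic]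
    rw [← hfm, div_le_div_iff_of_pos_right hn2]
    have : ((p.1:ℕ) + 1) * ((p.2:ℕ) + 1) ≤ m := hcard2 ▸ hcard
    exact_mod_cast this
  calc ((s : ℕ) + 1 : ℚ) * (n + 1) / (2 * n)
      = ∑ v : Fin n, ((s : ℚ) + 1) * ((v : ℚ) + 1) / (n^2 : ℚ) := by
        rw [← Finset.sum_div, ← Finset.mul_sum]
        have hsum : ∑ v : Fin n, ((v : ℚ) + 1) = (n : ℚ) * (n + 1) / 2 := by
          rw [Fin.sum_univ_eq_sum_range (fun i => ((i:ℕ):ℚ) + 1), gauss_sum_rat]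
        rw [hsum]
        have hn' : (n:ℚ) ≠ 0 := by positivity
        field_simp
    _ ≤ ∑ v : Fin n, f (s, v) :=
        Finset.sum_le_sum fun v _ => key (s, v)
end

section
/- Let m : [0,1] → [0,1] be an increasing bijection, f : [0,1]² → [0,1] a measurable coordinate-wise non-decreasing function whose distribution function satisfies μ{(x,y) : f(x,y) > t} ≥ 1 − m(t) for all t ∈ [0,1], and let t : [0,1] → [0,1] be a continuous non-decreasing function. Then for every s ∈ [0,1], f(t(s), s) ≥ m^{-1}(t(s)·s), and consequently ∫_0^1 f(t(s), s) ds ≥ ∫_0^1 m^{-1}(t(s)·s) ds. -/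
open MeasureTheory

/-- If `f : [0,1]² → [0,1]` is measurable, coordinate-wise non-decreasing and satisfies
`μ{f > r} ≥ 1 − m r` for all `r ∈ [0,1]`, and `t : [0,1] → [0,1]` is continuous non-decreasing,
then `f (t s, s) ≥ m⁻¹(t s · s)` for every `s ∈ [0,1]` and hence
`∫₀¹ f (t s, s) ds ≥ ∫₀¹ m⁻¹(t s · s) ds`. -/
theorem lower_estimate_line_integral
    (m minv : ℝ → ℝ)
    (hm : StrictMonoOn m (Set.Icc 0 1))
    (hmbij : Set.BijOn m (Set.Icc 0 1) (Set.Icc 0 1))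
    (hminv : Set.InvOn minv m (Set.Icc 0 1) (Set.Icc 0 1))
    (f : ℝ → ℝ → ℝ)
    (hfmeas : Measurable fun p : ℝ × ℝ => f p.1 p.2)
    (hfmaps : ∀ x ∈ Set.Icc (0:ℝ) 1, ∀ y ∈ Set.Icc (0:ℝ) 1, f x y ∈ Set.Icc (0:ℝ) 1)
    (hfmono : ∀ x₁ ∈ Set.Icc (0:ℝ) 1, ∀ x₂ ∈ Set.Icc (0:ℝ) 1,
      ∀ y₁ ∈ Set.Icc (0:ℝ) 1, ∀ y₂ ∈ Set.Icc (0:ℝ) 1,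
      x₁ ≤ x₂ → y₁ ≤ y₂ → f x₁ y₁ ≤ f x₂ y₂)
    (hdistr : ∀ r ∈ Set.Icc (0:ℝ) 1,
      ENNReal.ofReal (1 - m r) ≤
        volume {p : ℝ × ℝ | p ∈ Set.Icc (0:ℝ) 1 ×ˢ Set.Icc (0:ℝ) 1 ∧ r < f p.1 p.2})
    (t : ℝ → ℝ)
    (htc : ContinuousOn t (Set.Icc 0 1)) (htmono : MonotoneOn t (Set.Icc 0 1))
    (htmaps : ∀ s ∈ Set.Icc (0:ℝ) 1, t s ∈ Set.Icc (0:ℝ) 1) :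
    (∀ s ∈ Set.Icc (0:ℝ) 1, minv (t s * s) ≤ f (t s) s) ∧
    (∫ s in (0:ℝ)..1, minv (t s * s)) ≤ ∫ s in (0:ℝ)..1, f (t s) s := by
  -- `minv` maps `[0,1]` into `[0,1]`
  have hminvmaps : ∀ a ∈ Set.Icc (0:ℝ) 1, minv a ∈ Set.Icc (0:ℝ) 1 := by
    intro a ha
    obtain ⟨x, hx, rfl⟩ := hmbij.surjOn ha
    rw [hminv.1 hx]; exact hx
  -- `minv` is monotone on `[0,1]`
  have hminvmono : MonotoneOn minv (Set.Icc (0:ℝ) 1) := by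
    intro a ha b hb hab
    have := (hm.le_iff_le (hminvmaps a ha) (hminvmaps b hb)).mp
    apply this
    rw [hminv.2 ha, hminv.2 hb]; exact hab
  -- key pointwise estimate
  have key : ∀ s ∈ Set.Icc (0:ℝ) 1, minv (t s * s) ≤ f (t s) s := by
    intro s hs
    have hts := htmaps s hs
    set r := f (t s) s with hr
    have hrmem : r ∈ Set.Icc (0:ℝ) 1 := hfmaps _ hts _ hs
    have hprod : t s * s ∈ Set.Icc (0:ℝ) 1 :=
      ⟨mul_nonneg hts.1 hs.1, mul_le_one₀ hts.2 hs.1 hs.2⟩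
    have hle : t s * s ≤ m r := by
      set A : Set (ℝ × ℝ) := Set.Icc (0:ℝ) 1 ×ˢ Set.Icc (0:ℝ) 1 with hA
      set B : Set (ℝ × ℝ) := Set.Icc (0:ℝ) (t s) ×ˢ Set.Icc (0:ℝ) s with hB
      have hBA : B ⊆ A := Set.prod_mono (Set.Icc_subset_Icc le_rfl hts.2)
        (Set.Icc_subset_Icc le_rfl hs.2)
      have hSsub : {p : ℝ × ℝ | p ∈ A ∧ r < f p.1 p.2} ⊆ A \ B := by
        rintro ⟨x, y⟩ ⟨hpA, hpf⟩
        refine ⟨hpA, fun hpB => absurd hpf (not_lt.mpr ?_)⟩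
        exact hfmono x hpA.1 (t s) hts y hpA.2 s hs hpB.1.2 hpB.2.2
      have hvolB : volume B = ENNReal.ofReal (t s * s) := by
        rw [hB, Measure.volume_eq_prod, Measure.prod_prod, Real.volume_Icc, Real.volume_Icc]
        simp [ENNReal.ofReal_mul hts.1]
      have hvolA : volume A = 1 := by
        rw [hA, Measure.volume_eq_prod, Measure.prod_prod, Real.volume_Icc]; simp
      have hdiff : volume (A \ B) = ENNReal.ofReal (1 - t s * s) := by
        rw [measure_diff hBA (measurableSet_Icc.prod measurableSet_Icc).nullMeasurableSet
          (by rw [hvolB]; exact ENNReal.ofReal_ne_top), hvolA, hvolB,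
          ENNReal.ofReal_sub _ hprod.1, ENNReal.ofReal_one]
      have h1 : ENNReal.ofReal (1 - m r) ≤ ENNReal.ofReal (1 - t s * s) := by
        calc ENNReal.ofReal (1 - m r) ≤ volume {p : ℝ × ℝ | p ∈ A ∧ r < f p.1 p.2} :=
              hdistr r hrmem
          _ ≤ volume (A \ B) := measure_mono hSsub
          _ = ENNReal.ofReal (1 - t s * s) := hdiff
      have h2 : 1 - m r ≤ 1 - t s * s :=
        (ENNReal.ofReal_le_ofReal_iff (by linarith [hprod.2])).mp h1
      linarith
    have hmr : m r ∈ Set.Icc (0:ℝ) 1 := hmbij.mapsTo hrmem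
    have := hminvmono hprod hmr hle
    rwa [hminv.1 hrmem] at this
  refine ⟨key, ?_⟩
  -- both integrands are monotone on [0,1], hence interval integrable
  have htsmono : MonotoneOn (fun s => t s * s) (Set.Icc (0:ℝ) 1) := by
    intro a ha b hb hab
    have h1 : t a ≤ t b := htmono ha hb hab
    have h2 := (htmaps a ha).1
    have h3 := ha.1
    have h4 := (htmaps b hb).1
    exact mul_le_mul h1 hab h3 h4
  have hg1 : MonotoneOn (fun s => minv (t s * s)) (Set.Icc (0:ℝ) 1) := by
    intro a ha b hb hab
    exact hminvmono ⟨mul_nonneg (htmaps a ha).1 ha.1,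
        mul_le_one₀ (htmaps a ha).2 ha.1 ha.2⟩
      ⟨mul_nonneg (htmaps b hb).1 hb.1, mul_le_one₀ (htmaps b hb).2 hb.1 hb.2⟩
      (htsmono ha hb hab)
  have hg2 : MonotoneOn (fun s => f (t s) s) (Set.Icc (0:ℝ) 1) := by
    intro a ha b hb hab
    exact hfmono (t a) (htmaps a ha) (t b) (htmaps b hb) a ha b hb
      (htmono ha hb hab) hab
  have huIcc : Set.uIcc (0:ℝ) 1 = Set.Icc 0 1 := Set.uIcc_of_le zero_le_one
  have hi1 : IntervalIntegrable (fun s => minv (t s * s)) volume 0 1 :=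
    MonotoneOn.intervalIntegrable (by rw [huIcc]; exact hg1)
  have hi2 : IntervalIntegrable (fun s => f (t s) s) volume 0 1 :=
    MonotoneOn.intervalIntegrable (by rw [huIcc]; exact hg2)
  exact intervalIntegral.integral_mono_on zero_le_one hi1 hi2 key
end

section
/- Fix α ∈ (0,1] and define f : [0,1]² → [0,1] by f(x,y) = αy if x ≤ α and f(x,y) = (1−α)y + α if x > α. Then f is coordinate-wise non-decreasing, satisfies μ{(x,y) : f(x,y) > t} ≥ 1 − t for all t ∈ [0,1], and ∫_0^1 f(α, y) dy = α/2. -/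
open MeasureTheory

/-- The extremal function `f (x,y) = αy` for `x ≤ α`, `f (x,y) = (1−α)y + α` for `x > α`
(`α ∈ (0,1]`) is coordinate-wise non-decreasing, satisfies `μ{f > t} ≥ 1 − t` for all
`t ∈ [0,1]`, and `∫₀¹ f (α, y) dy = α/2`. -/
theorem extremal_function_properties
    (α : ℝ) (hα : α ∈ Set.Ioc (0:ℝ) 1)
    (f : ℝ → ℝ → ℝ)
    (hf : ∀ x y : ℝ, f x y = if x ≤ α then α * y else (1 - α) * y + α) :
    (∀ x₁ ∈ Set.Icc (0:ℝ) 1, ∀ x₂ ∈ Set.Icc (0:ℝ) 1,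
      ∀ y₁ ∈ Set.Icc (0:ℝ) 1, ∀ y₂ ∈ Set.Icc (0:ℝ) 1,
      x₁ ≤ x₂ → y₁ ≤ y₂ → f x₁ y₁ ≤ f x₂ y₂) ∧
    (∀ t ∈ Set.Icc (0:ℝ) 1,
      ENNReal.ofReal (1 - t) ≤
        volume {p : ℝ × ℝ | p ∈ Set.Icc (0:ℝ) 1 ×ˢ Set.Icc (0:ℝ) 1 ∧ t < f p.1 p.2}) ∧
    (∫ y in (0:ℝ)..1, f α y) = α / 2 := by
  obtain ⟨hα0, hα1⟩ := hα
  refine ⟨?_, ?_, ?_⟩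
  · intro x₁ hx₁ x₂ hx₂ y₁ hy₁ y₂ hy₂ hx hy
    rw [hf, hf]
    rcases le_or_gt x₂ α with h2 | h2
    · rw [if_pos (hx.trans h2), if_pos h2]
      nlinarith
    · rcases le_or_gt x₁ α with h1 | h1
      · rw [if_pos h1, if_neg (not_le.2 h2)]
        nlinarith [hy₁.1, hy₁.2, hy₂.1]
      · rw [if_neg (not_le.2 h1), if_neg (not_le.2 h2)]
        nlinarith
  · intro t ht
    obtain ⟨ht0, ht1⟩ := ht
    rcases lt_or_ge t α with htα | htα
    · -- t < α : union of two rectangles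
      have hsub : (Set.Icc (0:ℝ) α ×ˢ Set.Ioc (t/α) 1) ∪ (Set.Ioc α 1 ×ˢ Set.Icc (0:ℝ) 1)
          ⊆ {p : ℝ × ℝ | p ∈ Set.Icc (0:ℝ) 1 ×ˢ Set.Icc (0:ℝ) 1 ∧ t < f p.1 p.2} := by
        rintro ⟨x, y⟩ (⟨hx, hy⟩ | ⟨hx, hy⟩)
        · have hy0 : 0 ≤ y := (div_nonneg ht0 hα0.le).trans hy.1.le
          refine ⟨⟨⟨hx.1, hx.2.trans hα1⟩, ⟨hy0, hy.2⟩⟩, ?_⟩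
          rw [hf, if_pos hx.2]
          have := (div_lt_iff₀ hα0).1 hy.1
          linarith [this]
        · refine ⟨⟨⟨hα0.le.trans hx.1.le, hx.2⟩, hy⟩, ?_⟩
          rw [hf, if_neg (not_le.2 hx.1)]
          nlinarith [hy.1, hy.2]
      refine le_trans ?_ (measure_mono hsub)
      have hdisj : Disjoint (Set.Icc (0:ℝ) α ×ˢ Set.Ioc (t/α) 1)
          ((Set.Ioc α 1 : Set ℝ) ×ˢ Set.Icc (0:ℝ) 1) := by
        rw [Set.disjoint_left]
        rintro ⟨x, y⟩ ⟨hx, _⟩ ⟨hx', _⟩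
        exact absurd hx.2 (not_le.2 hx'.1)
      rw [measure_union hdisj (measurableSet_Ioc.prod measurableSet_Icc),
        Measure.volume_eq_prod, Measure.prod_prod, Measure.prod_prod,
        Real.volume_Icc, Real.volume_Ioc, Real.volume_Ioc, Real.volume_Icc]
      have hta : t / α ≤ 1 := (div_le_one hα0).2 htα.le
      rw [← ENNReal.ofReal_mul (by linarith), ← ENNReal.ofReal_mul (by linarith),
        ← ENNReal.ofReal_add (by nlinarith) (by nlinarith)]
      apply ENNReal.ofReal_le_ofReal
      have h1 : α * (1 - t / α) = α - t := by field_simp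
      nlinarith [h1]
    · -- α ≤ t
      rcases le_or_gt 1 t with ht1' | ht1'
      · rw [ENNReal.ofReal_eq_zero.2 (by linarith)]
        exact zero_le
      · have hα1' : α < 1 := lt_of_le_of_lt htα ht1'
        have h1α : (0:ℝ) < 1 - α := by linarith
        have hsub : (Set.Ioc α 1 ×ˢ Set.Ioc ((t - α)/(1 - α)) 1)
            ⊆ {p : ℝ × ℝ | p ∈ Set.Icc (0:ℝ) 1 ×ˢ Set.Icc (0:ℝ) 1 ∧ t < f p.1 p.2} := by
          rintro ⟨x, y⟩ ⟨hx, hy⟩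
          have hy0 : 0 ≤ y := (div_nonneg (by linarith) h1α.le).trans hy.1.le
          refine ⟨⟨⟨hα0.le.trans hx.1.le, hx.2⟩, ⟨hy0, hy.2⟩⟩, ?_⟩
          rw [hf, if_neg (not_le.2 hx.1)]
          have := (div_lt_iff₀ h1α).1 hy.1
          nlinarith [this]
        refine le_trans ?_ (measure_mono hsub)
        rw [Measure.volume_eq_prod, Measure.prod_prod, Real.volume_Ioc, Real.volume_Ioc]
        have hd1 : (t - α)/(1 - α) ≤ 1 := (div_le_one h1α).2 (by linarith)
        rw [← ENNReal.ofReal_mul (by linarith)]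
        apply ENNReal.ofReal_le_ofReal
        have h1 : (1 - α) * (1 - (t - α)/(1 - α)) = 1 - t := by field_simp; ring
        linarith [h1.ge]
  · have heq : ∀ y : ℝ, f α y = α * y := fun y => by rw [hf, if_pos le_rfl]
    simp only [heq]
    rw [intervalIntegral.integral_const_mul, integral_id]
    ring
end

section
/- Let m : [0,1] → [0,1] be an increasing bijection and t : [0,1] → [0,1] a continuous non-decreasing function. For s ∈ [0,1] let Π_s = [0,t(s)]×[0,s] \ ⋃_{u<s} [0,t(u)]×[0,u], and define f(x,y) = m^{-1}(t(s)·s) for (x,y) ∈ Π_s, and f(x,y) = m^{-1}(t(1) + (1−t(1))y) for x > t(1). Then f is coordinate-wise non-decreasing on [0,1]². -/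
open MeasureTheory

/-- The extremal function defined by `f = m⁻¹(t(s)·s)` on
`Π_s = [0,t(s)]×[0,s] \ ⋃_{u<s} [0,t(u)]×[0,u]` and `f (x,y) = m⁻¹(t(1)+(1−t(1))y)` for
`x > t(1)` is coordinate-wise non-decreasing on `[0,1]²`. -/
theorem extremal_function_monotone
    (m minv : ℝ → ℝ)
    (hm : StrictMonoOn m (Set.Icc 0 1))
    (hmbij : Set.BijOn m (Set.Icc 0 1) (Set.Icc 0 1))
    (hminv : Set.InvOn minv m (Set.Icc 0 1) (Set.Icc 0 1))
    (t : ℝ → ℝ)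
    (htc : ContinuousOn t (Set.Icc 0 1)) (htmono : MonotoneOn t (Set.Icc 0 1))
    (htmaps : ∀ s ∈ Set.Icc (0:ℝ) 1, t s ∈ Set.Icc (0:ℝ) 1)
    (f : ℝ × ℝ → ℝ)
    (hfPi : ∀ s ∈ Set.Icc (0:ℝ) 1, ∀ p ∈
      (Set.Icc (0:ℝ) (t s) ×ˢ Set.Icc (0:ℝ) s) \
        ⋃ u ∈ Set.Ico (0:ℝ) s, (Set.Icc (0:ℝ) (t u) ×ˢ Set.Icc (0:ℝ) u),
      f p = minv (t s * s))
    (hfright : ∀ p : ℝ × ℝ, p ∈ Set.Icc (0:ℝ) 1 ×ˢ Set.Icc (0:ℝ) 1 → t 1 < p.1 →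
      f p = minv (t 1 + (1 - t 1) * p.2)) :
    ∀ p ∈ Set.Icc (0:ℝ) 1 ×ˢ Set.Icc (0:ℝ) 1, ∀ q ∈ Set.Icc (0:ℝ) 1 ×ˢ Set.Icc (0:ℝ) 1,
      p.1 ≤ q.1 → p.2 ≤ q.2 → f p ≤ f q := by
  have h11 : (1:ℝ) ∈ Set.Icc (0:ℝ) 1 := ⟨zero_le_one, le_refl 1⟩
  have ht1 : t 1 ∈ Set.Icc (0:ℝ) 1 := htmaps 1 h11
  -- minv maps [0,1] to [0,1]
  have hminv_mem : ∀ b ∈ Set.Icc (0:ℝ) 1, minv b ∈ Set.Icc (0:ℝ) 1 := by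
    intro b hb
    obtain ⟨a, ha, rfl⟩ := hmbij.surjOn hb
    rw [hminv.1 ha]; exact ha
  -- minv is monotone on [0,1]
  have hminv_mono : ∀ a ∈ Set.Icc (0:ℝ) 1, ∀ b ∈ Set.Icc (0:ℝ) 1, a ≤ b → minv a ≤ minv b := by
    intro a ha b hb hab
    by_contra h
    push_neg at h
    have := hm (hminv_mem b hb) (hminv_mem a ha) h
    rw [hminv.2 hb, hminv.2 ha] at this
    exact absurd hab (not_le.mpr this)
  -- g(s) = t s * s is in [0,1] and monotone
  have hgIcc : ∀ s ∈ Set.Icc (0:ℝ) 1, t s * s ∈ Set.Icc (0:ℝ) 1 := by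
    intro s hs
    obtain ⟨h0, h1⟩ := htmaps s hs
    exact ⟨mul_nonneg h0 hs.1, mul_le_one₀ h1 hs.1 hs.2⟩
  have hgmono : ∀ s ∈ Set.Icc (0:ℝ) 1, ∀ s' ∈ Set.Icc (0:ℝ) 1, s ≤ s' →
      t s * s ≤ t s' * s' := by
    intro s hs s' hs' h
    exact mul_le_mul (htmono hs hs' h) h hs.1 (htmaps s' hs').1
  -- the set S x of levels covering x
  set S : ℝ → Set ℝ := fun x => {s ∈ Set.Icc (0:ℝ) 1 | x ≤ t s} with hS
  have hSclosed : ∀ x, IsClosed (S x) := by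
    intro x
    have : S x = Set.Icc (0:ℝ) 1 ∩ t ⁻¹' Set.Ici x := by
      ext s; simp [hS, Set.mem_Ici, and_comm]
    rw [this]
    exact htc.preimage_isClosed_of_isClosed isClosed_Icc isClosed_Ici
  have hSbdd : ∀ x, BddBelow (S x) := fun x => ⟨0, fun s hs => hs.1.1⟩
  have hSne : ∀ x, x ≤ t 1 → (S x).Nonempty := fun x hx => ⟨1, h11, hx⟩
  -- value of f on points with x ≤ t 1
  have hval : ∀ p ∈ Set.Icc (0:ℝ) 1 ×ˢ Set.Icc (0:ℝ) 1, p.1 ≤ t 1 →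
      max p.2 (sInf (S p.1)) ∈ Set.Icc (0:ℝ) 1 ∧
      f p = minv (t (max p.2 (sInf (S p.1))) * max p.2 (sInf (S p.1))) := by
    intro p hp hpt
    obtain ⟨⟨hx0, hx1⟩, ⟨hy0, hy1⟩⟩ := hp
    have hs0mem : sInf (S p.1) ∈ S p.1 :=
      (hSclosed p.1).csInf_mem (hSne p.1 hpt) (hSbdd p.1)
    set σ := max p.2 (sInf (S p.1)) with hσ
    have hσIcc : σ ∈ Set.Icc (0:ℝ) 1 := ⟨le_trans hy0 (le_max_left _ _),
      max_le hy1 hs0mem.1.2⟩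
    refine ⟨hσIcc, ?_⟩
    apply hfPi σ hσIcc
    have hxtσ : p.1 ≤ t σ :=
      le_trans hs0mem.2 (htmono hs0mem.1 hσIcc (le_max_right _ _))
    constructor
    · exact ⟨⟨hx0, hxtσ⟩, hy0, le_max_left _ _⟩
    · intro hmem
      simp only [Set.mem_iUnion] at hmem
      obtain ⟨u, hu, hpu⟩ := hmem
      obtain ⟨⟨_, hxu⟩, ⟨_, hyu⟩⟩ := hpu
      have huIcc : u ∈ Set.Icc (0:ℝ) 1 := ⟨hu.1, le_trans hu.2.le hσIcc.2⟩
      have huS : u ∈ S p.1 := ⟨huIcc, hxu⟩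
      have : σ ≤ u := max_le hyu (csInf_le (hSbdd p.1) huS)
      exact absurd hu.2 (not_lt.mpr this)
  -- main argument
  intro p hp q hq h1 h2
  obtain ⟨⟨hpx0, hpx1⟩, ⟨hpy0, hpy1⟩⟩ := hp
  obtain ⟨⟨hqx0, hqx1⟩, ⟨hqy0, hqy1⟩⟩ := hq
  by_cases hq1 : q.1 ≤ t 1
  · have hp1 : p.1 ≤ t 1 := le_trans h1 hq1
    obtain ⟨hσp, hfp⟩ := hval p ⟨⟨hpx0, hpx1⟩, hpy0, hpy1⟩ hp1
    obtain ⟨hσq, hfq⟩ := hval q ⟨⟨hqx0, hqx1⟩, hqy0, hqy1⟩ hq1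
    rw [hfp, hfq]
    have hsub : S q.1 ⊆ S p.1 := fun s hs => ⟨hs.1, le_trans h1 hs.2⟩
    have hσle : max p.2 (sInf (S p.1)) ≤ max q.2 (sInf (S q.1)) :=
      max_le_max h2 (csInf_le_csInf (hSbdd p.1) (hSne q.1 hq1) hsub)
    exact hminv_mono _ (hgIcc _ hσp) _ (hgIcc _ hσq) (hgmono _ hσp _ hσq hσle)
  · push_neg at hq1
    have hfq : f q = minv (t 1 + (1 - t 1) * q.2) :=
      hfright q ⟨⟨hqx0, hqx1⟩, hqy0, hqy1⟩ hq1
    have hrIcc : t 1 + (1 - t 1) * q.2 ∈ Set.Icc (0:ℝ) 1 := by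
      constructor
      · nlinarith [ht1.1, ht1.2]
      · nlinarith [ht1.1, ht1.2]
    by_cases hp1 : p.1 ≤ t 1
    · obtain ⟨hσp, hfp⟩ := hval p ⟨⟨hpx0, hpx1⟩, hpy0, hpy1⟩ hp1
      rw [hfp, hfq]
      have hle : t (max p.2 (sInf (S p.1))) * max p.2 (sInf (S p.1)) ≤
          t 1 + (1 - t 1) * q.2 := by
        have h1' : t (max p.2 (sInf (S p.1))) * max p.2 (sInf (S p.1)) ≤ t 1 * 1 :=
          hgmono _ hσp _ h11 hσp.2
        nlinarith [ht1.1, ht1.2]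
      exact hminv_mono _ (hgIcc _ hσp) _ hrIcc hle
    · push_neg at hp1
      have hfp : f p = minv (t 1 + (1 - t 1) * p.2) :=
        hfright p ⟨⟨hpx0, hpx1⟩, hpy0, hpy1⟩ hp1
      have hlIcc : t 1 + (1 - t 1) * p.2 ∈ Set.Icc (0:ℝ) 1 := by
        constructor
        · nlinarith [ht1.1, ht1.2]
        · nlinarith [ht1.1, ht1.2]
      rw [hfp, hfq]
      refine hminv_mono _ hlIcc _ hrIcc ?_
      nlinarith [ht1.1, ht1.2]
end

section
/- Let m : [0,1] → [0,1] be an increasing bijection and t : [0,1] → [0,1] continuous and non-decreasing. The function f defined by f(x,y) = m^{-1}(t(s)·s) on Π_s = [0,t(s)]×[0,s] \ ⋃_{u<s}[0,t(u)]×[0,u], and f(x,y) = m^{-1}(t(1)+(1−t(1))y) for x > t(1), satisfies μ{(x,y) : f(x,y) > r} = 1 − m(r) for all r ∈ [0,1]. -/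
open MeasureTheory

/-- Auxiliary: the least `u ∈ [0,1]` with `y ≤ u` and `x ≤ t u` exists whenever `x ≤ t 1`
and `y ∈ [0,1]`. -/
lemma exists_min_layer (t : ℝ → ℝ) (htc : ContinuousOn t (Set.Icc 0 1))
    (x y : ℝ) (hy : y ∈ Set.Icc (0:ℝ) 1) (hx1 : x ≤ t 1) :
    ∃ u ∈ Set.Icc (0:ℝ) 1, y ≤ u ∧ x ≤ t u ∧
      ∀ w ∈ Set.Icc (0:ℝ) 1, y ≤ w → x ≤ t w → u ≤ w := by
  set c : ℝ → ℝ := fun u => max 0 (min u 1) with hc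
  have hcmem : ∀ u, c u ∈ Set.Icc (0:ℝ) 1 := fun u =>
    ⟨le_max_left _ _, max_le zero_le_one (min_le_right _ _)⟩
  have hceq : ∀ u ∈ Set.Icc (0:ℝ) 1, c u = u := by
    intro u hu
    simp [hc, min_eq_left hu.2, max_eq_right hu.1]
  have hcc : Continuous c := continuous_const.max (continuous_id.min continuous_const)
  have hct : Continuous (fun u => t (c u)) := htc.comp_continuous hcc hcmem
  set K : Set ℝ := {u | u ∈ Set.Icc (0:ℝ) 1 ∧ y ≤ u ∧ x ≤ t u} with hK
  have hKalt : K = (Set.Icc (0:ℝ) 1 ∩ Set.Ici y) ∩ {u | x ≤ t (c u)} := by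
    ext u
    simp only [hK, Set.mem_setOf_eq, Set.mem_inter_iff, Set.mem_Ici]
    constructor
    · rintro ⟨h1, h2, h3⟩; exact ⟨⟨h1, h2⟩, by rw [hceq u h1]; exact h3⟩
    · rintro ⟨⟨h1, h2⟩, h3⟩; exact ⟨h1, h2, by rw [hceq u h1] at h3; exact h3⟩
  have hKclosed : IsClosed K := by
    rw [hKalt]
    exact (isClosed_Icc.inter isClosed_Ici).inter (isClosed_le continuous_const hct)
  have hKne : K.Nonempty := ⟨1, ⟨zero_le_one, le_refl 1⟩, hy.2, hx1⟩
  have hKbdd : BddBelow K := ⟨0, fun u hu => hu.1.1⟩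
  have hmem := hKclosed.csInf_mem hKne hKbdd
  exact ⟨sInf K, hmem.1, hmem.2.1, hmem.2.2,
    fun w hw h1 h2 => csInf_le hKbdd ⟨hw, h1, h2⟩⟩

/-- The extremal function defined by `f = m⁻¹(t(s)·s)` on
`Π_s = [0,t(s)]×[0,s] \ ⋃_{u<s} [0,t(u)]×[0,u]` and `f (x,y) = m⁻¹(t(1)+(1−t(1))y)` for
`x > t(1)` satisfies `μ{(x,y) ∈ [0,1]² : f (x,y) > r} = 1 − m r` for all `r ∈ [0,1]`. -/
theorem extremal_function_distribution
    (m minv : ℝ → ℝ)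
    (hm : StrictMonoOn m (Set.Icc 0 1))
    (hmbij : Set.BijOn m (Set.Icc 0 1) (Set.Icc 0 1))
    (hminv : Set.InvOn minv m (Set.Icc 0 1) (Set.Icc 0 1))
    (t : ℝ → ℝ)
    (htc : ContinuousOn t (Set.Icc 0 1)) (htmono : MonotoneOn t (Set.Icc 0 1))
    (htmaps : ∀ s ∈ Set.Icc (0:ℝ) 1, t s ∈ Set.Icc (0:ℝ) 1)
    (f : ℝ × ℝ → ℝ)
    (hfPi : ∀ s ∈ Set.Icc (0:ℝ) 1, ∀ p ∈
      (Set.Icc (0:ℝ) (t s) ×ˢ Set.Icc (0:ℝ) s) \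
        ⋃ u ∈ Set.Ico (0:ℝ) s, (Set.Icc (0:ℝ) (t u) ×ˢ Set.Icc (0:ℝ) u),
      f p = minv (t s * s))
    (hfright : ∀ p : ℝ × ℝ, p ∈ Set.Icc (0:ℝ) 1 ×ˢ Set.Icc (0:ℝ) 1 → t 1 < p.1 →
      f p = minv (t 1 + (1 - t 1) * p.2)) :
    ∀ r ∈ Set.Icc (0:ℝ) 1,
      volume {p : ℝ × ℝ | p ∈ Set.Icc (0:ℝ) 1 ×ˢ Set.Icc (0:ℝ) 1 ∧ r < f p}
        = ENNReal.ofReal (1 - m r) := by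
  intro r hr
  have h01 : (1:ℝ) ∈ Set.Icc (0:ℝ) 1 := ⟨zero_le_one, le_refl 1⟩
  set v : ℝ := m r with hv
  have hv01 : v ∈ Set.Icc (0:ℝ) 1 := hmbij.mapsTo hr
  have hmono : MonotoneOn m (Set.Icc 0 1) := hm.monotoneOn
  have hminv_mem : ∀ b ∈ Set.Icc (0:ℝ) 1, minv b ∈ Set.Icc (0:ℝ) 1 := by
    intro b hb
    obtain ⟨a, ha, hab⟩ := hmbij.surjOn hb
    rw [← hab, hminv.1 ha]; exact ha
  have hminv_right : ∀ b ∈ Set.Icc (0:ℝ) 1, m (minv b) = b := fun b hb => hminv.2 hb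
  -- r < minv b ↔ v < b for b ∈ [0,1]
  have hlt_iff : ∀ b ∈ Set.Icc (0:ℝ) 1, (r < minv b ↔ v < b) := by
    intro b hb
    constructor
    · intro h
      have := hm hr (hminv_mem b hb) h
      rwa [hminv_right b hb] at this
    · intro h
      by_contra hcon
      push_neg at hcon
      have := hmono (hminv_mem b hb) hr hcon
      rw [hminv_right b hb] at this
      exact absurd h (not_lt.2 this)
  have ht1 : t 1 ∈ Set.Icc (0:ℝ) 1 := htmaps 1 h01
  set sq : Set (ℝ × ℝ) := Set.Icc (0:ℝ) 1 ×ˢ Set.Icc (0:ℝ) 1 with hsq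
  -- value of f on the left region
  have hfleft : ∀ p : ℝ × ℝ, p ∈ sq → p.1 ≤ t 1 →
      ∃ u ∈ Set.Icc (0:ℝ) 1, p.2 ≤ u ∧ p.1 ≤ t u ∧
        (∀ w ∈ Set.Icc (0:ℝ) 1, p.2 ≤ w → p.1 ≤ t w → u ≤ w) ∧
        f p = minv (t u * u) := by
    intro p hp hp1
    obtain ⟨u, hu, hyu, hxu, humin⟩ := exists_min_layer t htc p.1 p.2 hp.2 hp1
    refine ⟨u, hu, hyu, hxu, humin, ?_⟩
    apply hfPi u hu
    refine ⟨⟨⟨hp.1.1, hxu⟩, ⟨hp.2.1, hyu⟩⟩, ?_⟩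
    intro hmem
    rw [Set.mem_iUnion₂] at hmem
    obtain ⟨w, hw, hmemw⟩ := hmem
    obtain ⟨hw0, hwu⟩ := hw
    have hw1 : w ∈ Set.Icc (0:ℝ) 1 := ⟨hw0, le_trans (le_of_lt hwu) hu.2⟩
    have := humin w hw1 hmemw.2.2 hmemw.1.2
    exact absurd hwu (not_lt.2 this)
  -- measure of a product of intervals
  have hvol : ∀ (A B : Set ℝ), volume (A ×ˢ B) = volume A * volume B := by
    intro A B
    rw [Measure.volume_eq_prod, Measure.prod_prod]
  rcases le_or_gt v (t 1) with hcase | hcase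
  · -- Case A : v ≤ t 1
    -- find s with t s * s = v, maximal
    set c : ℝ → ℝ := fun u => max 0 (min u 1) with hc
    have hcmem : ∀ u, c u ∈ Set.Icc (0:ℝ) 1 := fun u =>
      ⟨le_max_left _ _, max_le zero_le_one (min_le_right _ _)⟩
    have hceq : ∀ u ∈ Set.Icc (0:ℝ) 1, c u = u := by
      intro u hu
      simp [hc, min_eq_left hu.2, max_eq_right hu.1]
    have hcc : Continuous c := continuous_const.max (continuous_id.min continuous_const)
    have hG : Continuous (fun u => t (c u) * c u) := (htc.comp_continuous hcc hcmem).mul hcc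
    set S : Set ℝ := {u | u ∈ Set.Icc (0:ℝ) 1 ∧ t u * u ≤ v} with hS
    have hSalt : S = Set.Icc (0:ℝ) 1 ∩ {u | t (c u) * c u ≤ v} := by
      ext u
      simp only [hS, Set.mem_setOf_eq, Set.mem_inter_iff]
      constructor
      · rintro ⟨h1, h2⟩; exact ⟨h1, by rw [hceq u h1]; exact h2⟩
      · rintro ⟨h1, h2⟩; rw [hceq u h1] at h2; exact ⟨h1, h2⟩
    have hSclosed : IsClosed S := by
      rw [hSalt]
      exact isClosed_Icc.inter (isClosed_le hG continuous_const)
    have hSne : S.Nonempty := ⟨0, ⟨le_refl 0, zero_le_one⟩, by simp [hv01.1]⟩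
    have hSbdd : BddAbove S := ⟨1, fun u hu => hu.1.2⟩
    set s : ℝ := sSup S with hss
    have hsmem := hSclosed.csSup_mem hSne hSbdd
    have hs01 : s ∈ Set.Icc (0:ℝ) 1 := hsmem.1
    have hsle : t s * s ≤ v := hsmem.2
    have hts01 : t s ∈ Set.Icc (0:ℝ) 1 := htmaps s hs01
    -- for u in [0,1] with u > s, t u * u > v
    have hgt : ∀ u ∈ Set.Icc (0:ℝ) 1, s < u → v < t u * u := by
      intro u hu hsu
      by_contra hcon
      push_neg at hcon
      exact absurd (le_csSup hSbdd ⟨hu, hcon⟩) (not_le.2 hsu)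
    -- t s * s = v
    have hseq : t s * s = v := by
      rcases lt_or_eq_of_le hsle with hlt | heq
      · exfalso
        rcases lt_or_eq_of_le hs01.2 with hs1 | hs1
        · -- s < 1 : continuity gives a point of S above s
          have htend : Filter.Tendsto (fun u => t (c u) * c u)
              (nhdsWithin s (Set.Ioi s)) (nhds (t (c s) * c s)) :=
            (hG.tendsto s).mono_left nhdsWithin_le_nhds
          have hcs : t (c s) * c s = t s * s := by rw [hceq s hs01]
          rw [hcs] at htend
          have hev : ∀ᶠ u in nhdsWithin s (Set.Ioi s), t (c u) * c u < v :=
            htend.eventually_lt_const hlt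
          have hev2 : Set.Ioo s 1 ∈ nhdsWithin s (Set.Ioi s) :=
            Ioo_mem_nhdsGT_of_mem ⟨le_refl s, hs1⟩
          obtain ⟨u, hu1, hu2⟩ := (hev.and (Filter.eventually_of_mem hev2 (fun x hx => hx))).exists
          have hu01 : u ∈ Set.Icc (0:ℝ) 1 := ⟨le_trans hs01.1 (le_of_lt hu2.1), le_of_lt hu2.2⟩
          have : t u * u < v := by rw [← hceq u hu01]; exact hu1
          exact absurd (le_csSup hSbdd ⟨hu01, le_of_lt this⟩) (not_le.2 hu2.1)
        · rw [hs1] at hlt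
          rw [mul_one] at hlt
          exact absurd hcase (not_le.2 hlt)
      · exact heq
    -- the target set equals sq \ box up to a null set
    set box : Set (ℝ × ℝ) := Set.Icc (0:ℝ) (t s) ×ˢ Set.Icc (0:ℝ) s with hbox
    set E : Set (ℝ × ℝ) := {p : ℝ × ℝ | p ∈ sq ∧ r < f p} with hE
    set N : Set (ℝ × ℝ) := (Set.univ : Set ℝ) ×ˢ ({0} : Set ℝ) with hN
    have hEsub : E ⊆ sq \ box := by
      rintro p ⟨hp, hrp⟩
      refine ⟨hp, ?_⟩
      rintro ⟨hpx, hpy⟩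
      have hp1 : p.1 ≤ t 1 := le_trans hpx.2 (htmono hs01 h01 hs01.2)
      obtain ⟨u, hu, hyu, hxu, humin, hfp⟩ := hfleft p hp hp1
      have hus : u ≤ s := humin s hs01 hpy.2 hpx.2
      have htu01 : t u ∈ Set.Icc (0:ℝ) 1 := htmaps u hu
      have hle : t u * u ≤ t s * s :=
        mul_le_mul (htmono hu hs01 hus) hus hu.1 hts01.1
      rw [hseq] at hle
      have hb : t u * u ∈ Set.Icc (0:ℝ) 1 :=
        ⟨mul_nonneg htu01.1 hu.1, le_trans hle hv01.2⟩
      rw [hfp] at hrp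
      have := (hlt_iff _ hb).1 hrp
      exact absurd this (not_lt.2 hle)
    have hsupE : (sq \ box) \ N ⊆ E := by
      rintro p ⟨⟨hp, hpbox⟩, hpN⟩
      have hpy0 : p.2 ≠ 0 := by
        intro h
        exact hpN ⟨Set.mem_univ _, h⟩
      have hpy0' : 0 < p.2 := lt_of_le_of_ne hp.2.1 (Ne.symm hpy0)
      refine ⟨hp, ?_⟩
      rcases le_or_gt p.1 (t 1) with hp1 | hp1
      · obtain ⟨u, hu, hyu, hxu, humin, hfp⟩ := hfleft p hp hp1
        have hsu : s < u := by
          by_contra hcon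
          push_neg at hcon
          apply hpbox
          exact ⟨⟨hp.1.1, le_trans hxu (htmono hu hs01 hcon)⟩, ⟨hp.2.1, le_trans hyu hcon⟩⟩
        have hgtv := hgt u hu hsu
        have htu01 : t u ∈ Set.Icc (0:ℝ) 1 := htmaps u hu
        have hb : t u * u ∈ Set.Icc (0:ℝ) 1 :=
          ⟨mul_nonneg htu01.1 hu.1, le_trans (mul_le_mul htu01.2 hu.2 hu.1 zero_le_one) (by norm_num)⟩
        rw [hfp]
        exact (hlt_iff _ hb).2 hgtv
      · have hfp := hfright p hp hp1
        have ht1lt : t 1 < 1 := lt_of_lt_of_le hp1 hp.1.2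
        have hw : t 1 + (1 - t 1) * p.2 ∈ Set.Icc (0:ℝ) 1 := by
          constructor
          · have : (0:ℝ) ≤ (1 - t 1) * p.2 := mul_nonneg (by linarith) hp.2.1
            linarith [ht1.1]
          · nlinarith [hp.2.2, ht1.1, ht1.2]
        rw [hfp]
        apply (hlt_iff _ hw).2
        have : (0:ℝ) < (1 - t 1) * p.2 := mul_pos (by linarith) hpy0'
        linarith
    -- measure computation
    have hNnull : volume N = 0 := by
      rw [hN, hvol]
      simp
    have hboxsub : box ⊆ sq := by
      rintro p ⟨hpx, hpy⟩
      exact ⟨⟨hpx.1, le_trans hpx.2 hts01.2⟩, ⟨hpy.1, le_trans hpy.2 hs01.2⟩⟩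
    have hboxvol : volume box = ENNReal.ofReal v := by
      rw [hbox, hvol, Real.volume_Icc, Real.volume_Icc, sub_zero, sub_zero,
        ← ENNReal.ofReal_mul hts01.1, hseq]
    have hsqvol : volume sq = 1 := by
      rw [hsq, hvol, Real.volume_Icc, sub_zero, ENNReal.ofReal_one, one_mul]
    have hdiffvol : volume (sq \ box) = ENNReal.ofReal (1 - v) := by
      rw [measure_diff hboxsub (measurableSet_Icc.prod measurableSet_Icc).nullMeasurableSet
        (by rw [hboxvol]; exact ENNReal.ofReal_ne_top),
        hsqvol, hboxvol, ← ENNReal.ofReal_one, ← ENNReal.ofReal_sub _ hv01.1]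
    have h1 : volume E ≤ ENNReal.ofReal (1 - v) := by
      rw [← hdiffvol]; exact measure_mono hEsub
    have h2 : ENNReal.ofReal (1 - v) ≤ volume E := by
      rw [← hdiffvol, ← measure_diff_null (s := sq \ box) hNnull]
      exact measure_mono hsupE
    exact le_antisymm h1 h2
  · -- Case B : t 1 < v
    have ht1lt1 : t 1 < 1 := lt_of_lt_of_le hcase hv01.2
    set cst : ℝ := (v - t 1) / (1 - t 1) with hcst
    have hden : (0:ℝ) < 1 - t 1 := by linarith
    have hcst0 : 0 < cst := div_pos (by linarith) hden
    have hcst1 : cst ≤ 1 := by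
      rw [div_le_one hden]; linarith [hv01.2]
    have hEeq : {p : ℝ × ℝ | p ∈ sq ∧ r < f p} = Set.Ioc (t 1) 1 ×ˢ Set.Ioc cst 1 := by
      ext p
      simp only [Set.mem_setOf_eq, Set.mem_prod, Set.mem_Ioc]
      constructor
      · rintro ⟨hp, hrp⟩
        rcases le_or_gt p.1 (t 1) with hp1 | hp1
        · exfalso
          obtain ⟨u, hu, hyu, hxu, humin, hfp⟩ := hfleft p hp hp1
          have htu01 : t u ∈ Set.Icc (0:ℝ) 1 := htmaps u hu
          have hle : t u * u ≤ t 1 :=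
            le_trans (mul_le_mul (le_refl _) hu.2 hu.1 htu01.1) (by rw [mul_one]; exact htmono hu h01 hu.2)
          have hb : t u * u ∈ Set.Icc (0:ℝ) 1 := ⟨mul_nonneg htu01.1 hu.1, le_trans hle ht1.2⟩
          rw [hfp] at hrp
          have := (hlt_iff _ hb).1 hrp
          linarith
        · have hfp := hfright p hp hp1
          have hw : t 1 + (1 - t 1) * p.2 ∈ Set.Icc (0:ℝ) 1 := by
            constructor
            · have : (0:ℝ) ≤ (1 - t 1) * p.2 := mul_nonneg (by linarith) hp.2.1
              linarith [ht1.1]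
            · nlinarith [hp.2.2, ht1.1, ht1.2]
          rw [hfp] at hrp
          have hvw := (hlt_iff _ hw).1 hrp
          have hp2 : cst < p.2 := by
            rw [hcst, div_lt_iff₀ hden]
            nlinarith
          exact ⟨⟨hp1, hp.1.2⟩, hp2, hp.2.2⟩
      · rintro ⟨⟨hpx1, hpx2⟩, ⟨hpy1, hpy2⟩⟩
        have hp : p ∈ sq := ⟨⟨le_trans ht1.1 (le_of_lt hpx1), hpx2⟩,
          ⟨le_trans (le_of_lt hcst0) (le_of_lt hpy1), hpy2⟩⟩
        refine ⟨hp, ?_⟩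
        have hfp := hfright p hp hpx1
        have hw : t 1 + (1 - t 1) * p.2 ∈ Set.Icc (0:ℝ) 1 := by
          constructor
          · have : (0:ℝ) ≤ (1 - t 1) * p.2 := mul_nonneg (by linarith) hp.2.1
            linarith [ht1.1]
          · nlinarith [hp.2.2, ht1.1, ht1.2]
        rw [hfp]
        apply (hlt_iff _ hw).2
        have : v - t 1 < (1 - t 1) * p.2 := by
          rw [hcst, div_lt_iff₀ hden] at hpy1
          linarith
        linarith
    rw [hEeq, hvol, Real.volume_Ioc, Real.volume_Ioc,
      ← ENNReal.ofReal_mul (by linarith)]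
    congr 1
    rw [hcst]
    field_simp
    ring
end

section
/- Let m : [0,1] → [0,1] be an increasing bijection and t : [0,1] → [0,1] continuous and non-decreasing. Then the infimum over all measurable coordinate-wise non-decreasing f : [0,1]² → [0,1] with μ{f > r} ≥ 1 − m(r) for all r ∈ [0,1] of ∫_0^1 f(t(s), s) ds equals ∫_0^1 m^{-1}(t(s)·s) ds, and this infimum is attained. -/
open MeasureTheory

noncomputable def proj01 (s : ℝ) : ℝ := max 0 (min 1 s)

lemma proj01_mem (s : ℝ) : proj01 s ∈ Set.Icc (0:ℝ) 1 :=
  ⟨le_max_left _ _, max_le zero_le_one (min_le_left _ _)⟩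

lemma proj01_mono : Monotone proj01 := fun a b hab =>
  max_le_max le_rfl (min_le_min le_rfl hab)

lemma proj01_eq {s : ℝ} (hs : s ∈ Set.Icc (0:ℝ) 1) : proj01 s = s := by
  unfold proj01
  rw [min_eq_right hs.2, max_eq_right hs.1]

noncomputable def tauAux (t : ℝ → ℝ) (x : ℝ) : ℝ :=
  if x ≤ t 1 then sInf {s : ℝ | s ∈ Set.Icc (0:ℝ) 1 ∧ x ≤ t s} else 2

lemma tauAux_of_le (t : ℝ → ℝ) {x : ℝ} (h : x ≤ t 1) :
    tauAux t x = sInf {s : ℝ | s ∈ Set.Icc (0:ℝ) 1 ∧ x ≤ t s} := if_pos h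

lemma tauAux_of_gt (t : ℝ → ℝ) {x : ℝ} (h : ¬ x ≤ t 1) : tauAux t x = 2 := if_neg h

lemma tauAux_mono (t : ℝ → ℝ) : Monotone (tauAux t) := by
  intro x1 x2 h
  by_cases h2 : x2 ≤ t 1
  · have h1 : x1 ≤ t 1 := h.trans h2
    rw [tauAux_of_le t h1, tauAux_of_le t h2]
    apply csInf_le_csInf
    · exact ⟨0, fun s hs => hs.1.1⟩
    · exact ⟨1, ⟨by norm_num, h2⟩⟩
    · intro s hs
      exact ⟨hs.1, h.trans hs.2⟩
  · rw [tauAux_of_gt t h2]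
    by_cases h1 : x1 ≤ t 1
    · rw [tauAux_of_le t h1]
      have : sInf {s : ℝ | s ∈ Set.Icc (0:ℝ) 1 ∧ x1 ≤ t s} ≤ 1 :=
        csInf_le ⟨0, fun s hs => hs.1.1⟩ ⟨⟨zero_le_one, le_rfl⟩, h1⟩
      linarith
    · rw [tauAux_of_gt t h1]

noncomputable def FAux (minv t : ℝ → ℝ) (s : ℝ) : ℝ :=
  if s ≤ 1 then minv (t (proj01 s) * proj01 s) else 1

lemma FAux_of_le (minv t : ℝ → ℝ) {s : ℝ} (h : s ≤ 1) :
    FAux minv t s = minv (t (proj01 s) * proj01 s) := if_pos h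

lemma FAux_of_gt (minv t : ℝ → ℝ) {s : ℝ} (h : ¬ s ≤ 1) : FAux minv t s = 1 := if_neg h

noncomputable def fopt (minv t : ℝ → ℝ) (x y : ℝ) : ℝ :=
  FAux minv t (max y (tauAux t x))

/-- Theorem 1 of the paper: the infimum over all measurable coordinate-wise non-decreasing
`f : [0,1]² → [0,1]` with `μ{f > r} ≥ 1 − m r` (`r ∈ [0,1]`) of `∫₀¹ f (t s, s) ds` equals
`∫₀¹ m⁻¹(t s · s) ds`, and it is attained, i.e. it is the least element of the set of values. -/
theorem inf_line_integral
    (m minv : ℝ → ℝ)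
    (hm : StrictMonoOn m (Set.Icc 0 1))
    (hmbij : Set.BijOn m (Set.Icc 0 1) (Set.Icc 0 1))
    (hminv : Set.InvOn minv m (Set.Icc 0 1) (Set.Icc 0 1))
    (t : ℝ → ℝ)
    (htc : ContinuousOn t (Set.Icc 0 1)) (htmono : MonotoneOn t (Set.Icc 0 1))
    (htmaps : ∀ s ∈ Set.Icc (0:ℝ) 1, t s ∈ Set.Icc (0:ℝ) 1) :
    IsLeast
      {I : ℝ | ∃ f : ℝ → ℝ → ℝ,
        (Measurable fun p : ℝ × ℝ => f p.1 p.2) ∧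
        (∀ x ∈ Set.Icc (0:ℝ) 1, ∀ y ∈ Set.Icc (0:ℝ) 1, f x y ∈ Set.Icc (0:ℝ) 1) ∧
        (∀ x₁ ∈ Set.Icc (0:ℝ) 1, ∀ x₂ ∈ Set.Icc (0:ℝ) 1,
          ∀ y₁ ∈ Set.Icc (0:ℝ) 1, ∀ y₂ ∈ Set.Icc (0:ℝ) 1,
          x₁ ≤ x₂ → y₁ ≤ y₂ → f x₁ y₁ ≤ f x₂ y₂) ∧
        (∀ r ∈ Set.Icc (0:ℝ) 1,
          ENNReal.ofReal (1 - m r) ≤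
            volume {p : ℝ × ℝ | p ∈ Set.Icc (0:ℝ) 1 ×ˢ Set.Icc (0:ℝ) 1 ∧ r < f p.1 p.2}) ∧
        I = ∫ s in (0:ℝ)..1, f (t s) s}
      (∫ s in (0:ℝ)..1, minv (t s * s)) := by
  have h01 : (0:ℝ) ∈ Set.Icc (0:ℝ) 1 := ⟨le_rfl, zero_le_one⟩
  have h11 : (1:ℝ) ∈ Set.Icc (0:ℝ) 1 := ⟨zero_le_one, le_rfl⟩
  have hrm : ∀ r ∈ Set.Icc (0:ℝ) 1, m r ∈ Set.Icc (0:ℝ) 1 := fun r hr => hmbij.mapsTo hr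
  have hmmono : MonotoneOn m (Set.Icc 0 1) := hm.monotoneOn
  have hminvmaps : ∀ c ∈ Set.Icc (0:ℝ) 1, minv c ∈ Set.Icc (0:ℝ) 1 := by
    intro c hc
    obtain ⟨x, hx, hxc⟩ := hmbij.surjOn hc
    rw [← hxc, hminv.1 hx]
    exact hx
  have hminvmono : MonotoneOn minv (Set.Icc 0 1) := by
    intro a ha b hb hab
    apply (hm.le_iff_le (hminvmaps a ha) (hminvmaps b hb)).mp
    rw [hminv.2 ha, hminv.2 hb]
    exact hab
  have hq : ∀ s ∈ Set.Icc (0:ℝ) 1, t s * s ∈ Set.Icc (0:ℝ) 1 := by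
    intro s hs
    have ht := htmaps s hs
    exact ⟨mul_nonneg ht.1 hs.1, by nlinarith [ht.2, hs.2, hs.1]⟩
  have hqmono : MonotoneOn (fun s => t s * s) (Set.Icc (0:ℝ) 1) := by
    intro a ha b hb hab
    exact mul_le_mul (htmono ha hb hab) hab ha.1 (htmaps b hb).1
  have hqcont : ContinuousOn (fun s => t s * s) (Set.Icc (0:ℝ) 1) := htc.mul continuousOn_id
  have hFrange : ∀ s, FAux minv t s ∈ Set.Icc (0:ℝ) 1 := by
    intro s
    by_cases h : s ≤ 1
    · rw [FAux_of_le minv t h]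
      exact hminvmaps _ (hq _ (proj01_mem s))
    · rw [FAux_of_gt minv t h]
      exact h11
  have hFmono : Monotone (FAux minv t) := by
    intro a b hab
    by_cases hb1 : b ≤ 1
    · rw [FAux_of_le minv t (hab.trans hb1), FAux_of_le minv t hb1]
      exact hminvmono (hq _ (proj01_mem a)) (hq _ (proj01_mem b))
        (hqmono (proj01_mem a) (proj01_mem b) (proj01_mono hab))
    · rw [FAux_of_gt minv t hb1]
      exact (hFrange a).2
  have hvol : ∀ a b : ℝ, volume (Set.Icc (0:ℝ) a ×ˢ Set.Icc (0:ℝ) b)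
      = ENNReal.ofReal a * ENNReal.ofReal b := by
    intro a b
    rw [Measure.volume_eq_prod, Measure.prod_prod, Real.volume_Icc, Real.volume_Icc,
      sub_zero, sub_zero]
  have hvolsq : volume (Set.Icc (0:ℝ) 1 ×ˢ Set.Icc (0:ℝ) 1) = 1 := by
    rw [hvol, ENNReal.ofReal_one, one_mul]
  have hm1 : m 1 = 1 := by
    obtain ⟨x, hx, hxm⟩ := hmbij.surjOn h11
    have h2 := hmmono hx h11 hx.2
    have h3 := (hrm 1 h11).2
    linarith [hxm ▸ h2]
  constructor
  · -- membership : the optimal f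
    refine ⟨fopt minv t, ?_, ?_, ?_, ?_, ?_⟩
    · -- measurability
      have heq : (fun p : ℝ × ℝ => fopt minv t p.1 p.2)
          = (FAux minv t) ∘ (fun p : ℝ × ℝ => max p.2 (tauAux t p.1)) := rfl
      rw [heq]
      exact hFmono.measurable.comp
        (measurable_snd.max ((tauAux_mono t).measurable.comp measurable_fst))
    · intro x _ y _
      exact hFrange _
    · intro x1 _ x2 _ y1 _ y2 _ hx hy
      exact hFmono (max_le_max hy (tauAux_mono t hx))
    · -- measure constraint
      intro r hr
      rcases eq_or_lt_of_le hr.2 with hr1 | hr1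
      · rw [hr1, hm1]
        simp
      · -- r < 1
        have hA0 : (0:ℝ) ∈ {s : ℝ | s ∈ Set.Icc (0:ℝ) 1 ∧ t s * s ≤ m r} :=
          ⟨h01, by rw [mul_zero]; exact (hrm r hr).1⟩
        have hAbdd : BddAbove {s : ℝ | s ∈ Set.Icc (0:ℝ) 1 ∧ t s * s ≤ m r} :=
          ⟨1, fun s hs => hs.1.2⟩
        have hAclosed : IsClosed {s : ℝ | s ∈ Set.Icc (0:ℝ) 1 ∧ t s * s ≤ m r} := by
          have heq : {s : ℝ | s ∈ Set.Icc (0:ℝ) 1 ∧ t s * s ≤ m r}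
              = Set.Icc (0:ℝ) 1 ∩ (fun s => t s * s) ⁻¹' Set.Iic (m r) := rfl
          rw [heq]
          exact hqcont.preimage_isClosed_of_isClosed isClosed_Icc isClosed_Iic
        set sr := sSup {s : ℝ | s ∈ Set.Icc (0:ℝ) 1 ∧ t s * s ≤ m r} with hsrdef
        have hsrA : sr ∈ {s : ℝ | s ∈ Set.Icc (0:ℝ) 1 ∧ t s * s ≤ m r} :=
          hAclosed.csSup_mem ⟨0, hA0⟩ hAbdd
        have hclaim : ∀ p : ℝ × ℝ, p ∈ Set.Icc (0:ℝ) 1 ×ˢ Set.Icc (0:ℝ) 1 →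
            fopt minv t p.1 p.2 ≤ r → p ∈ Set.Icc (0:ℝ) (t sr) ×ˢ Set.Icc (0:ℝ) sr := by
          rintro ⟨x, y⟩ hp hfr
          obtain ⟨hx, hy⟩ := hp
          simp only at hx hy hfr ⊢
          have hσ1 : max y (tauAux t x) ≤ 1 := by
            by_contra hcon
            rw [show fopt minv t x y = FAux minv t (max y (tauAux t x)) from rfl,
              FAux_of_gt minv t hcon] at hfr
            linarith
          have hτ1 : tauAux t x ≤ 1 := le_trans (le_max_right _ _) hσ1
          have hxt1 : x ≤ t 1 := by
            by_contra hcon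
            rw [tauAux_of_gt t hcon] at hτ1
            linarith
          have hSclosed : IsClosed {s : ℝ | s ∈ Set.Icc (0:ℝ) 1 ∧ x ≤ t s} := by
            have heq : {s : ℝ | s ∈ Set.Icc (0:ℝ) 1 ∧ x ≤ t s}
                = Set.Icc (0:ℝ) 1 ∩ t ⁻¹' Set.Ici x := rfl
            rw [heq]
            exact htc.preimage_isClosed_of_isClosed isClosed_Icc isClosed_Ici
          have hτS : tauAux t x ∈ {s : ℝ | s ∈ Set.Icc (0:ℝ) 1 ∧ x ≤ t s} := by
            rw [tauAux_of_le t hxt1]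
            exact hSclosed.csInf_mem ⟨1, ⟨h11, hxt1⟩⟩ ⟨0, fun s hs => hs.1.1⟩
          have hσmem : max y (tauAux t x) ∈ Set.Icc (0:ℝ) 1 :=
            ⟨le_trans hy.1 (le_max_left _ _), hσ1⟩
          have hfval : fopt minv t x y
              = minv (t (max y (tauAux t x)) * (max y (tauAux t x))) := by
            rw [show fopt minv t x y = FAux minv t (max y (tauAux t x)) from rfl,
              FAux_of_le minv t hσ1, proj01_eq hσmem]
          have hc : t (max y (tauAux t x)) * (max y (tauAux t x)) ≤ m r := by
            rw [hfval] at hfr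
            have h2 := hmmono (hminvmaps _ (hq _ hσmem)) hr hfr
            rwa [hminv.2 (hq _ hσmem)] at h2
          have hσsr : max y (tauAux t x) ≤ sr := le_csSup hAbdd ⟨hσmem, hc⟩
          refine ⟨⟨hx.1, ?_⟩, ⟨hy.1, le_trans (le_max_left _ _) hσsr⟩⟩
          exact le_trans hτS.2 (htmono hτS.1 hsrA.1 (le_trans (le_max_right _ _) hσsr))
        calc ENNReal.ofReal (1 - m r)
            = 1 - ENNReal.ofReal (m r) := by
              rw [ENNReal.ofReal_sub 1 (hrm r hr).1, ENNReal.ofReal_one]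
          _ ≤ 1 - ENNReal.ofReal (t sr * sr) :=
              tsub_le_tsub_left (ENNReal.ofReal_le_ofReal hsrA.2) 1
          _ = volume (Set.Icc (0:ℝ) 1 ×ˢ Set.Icc (0:ℝ) 1)
              - volume (Set.Icc (0:ℝ) (t sr) ×ˢ Set.Icc (0:ℝ) sr) := by
              rw [hvolsq, hvol, ENNReal.ofReal_mul (htmaps sr hsrA.1).1]
          _ ≤ volume ((Set.Icc (0:ℝ) 1 ×ˢ Set.Icc (0:ℝ) 1)
              \ (Set.Icc (0:ℝ) (t sr) ×ˢ Set.Icc (0:ℝ) sr)) := le_measure_diff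
          _ ≤ volume {p : ℝ × ℝ | p ∈ Set.Icc (0:ℝ) 1 ×ˢ Set.Icc (0:ℝ) 1
              ∧ r < fopt minv t p.1 p.2} := by
              apply measure_mono
              rintro p ⟨hps, hpr⟩
              exact ⟨hps, lt_of_not_ge fun h => hpr (hclaim p hps h)⟩
    · -- integral value
      apply intervalIntegral.integral_congr
      intro s hs
      rw [Set.uIcc_of_le zero_le_one] at hs
      -- minv (t s * s) = fopt minv t (t s) s
      have h1 : tauAux t (t s) ≤ s := by
        rw [tauAux_of_le t (htmono hs h11 hs.2)]
        exact csInf_le ⟨0, fun u hu => hu.1.1⟩ ⟨hs, le_rfl⟩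
      show minv (t s * s) = fopt minv t (t s) s
      rw [show fopt minv t (t s) s = FAux minv t (max s (tauAux t (t s))) from rfl,
        max_eq_left h1, FAux_of_le minv t hs.2, proj01_eq hs]
  · -- lower bound
    rintro I ⟨g, hgmeas, hgrange, hgmono, hgconstr, rfl⟩
    have hpt : ∀ s ∈ Set.Icc (0:ℝ) 1, minv (t s * s) ≤ g (t s) s := by
      intro s hs
      have hx : t s ∈ Set.Icc (0:ℝ) 1 := htmaps s hs
      have hr : g (t s) s ∈ Set.Icc (0:ℝ) 1 := hgrange (t s) hx s hs
      have hrect : Set.Icc (0:ℝ) (t s) ×ˢ Set.Icc (0:ℝ) s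
          ⊆ Set.Icc (0:ℝ) 1 ×ˢ Set.Icc (0:ℝ) 1 :=
        Set.prod_mono (Set.Icc_subset_Icc le_rfl hx.2) (Set.Icc_subset_Icc le_rfl hs.2)
      have hsub : {p : ℝ × ℝ | p ∈ Set.Icc (0:ℝ) 1 ×ˢ Set.Icc (0:ℝ) 1 ∧ g (t s) s < g p.1 p.2}
          ⊆ (Set.Icc (0:ℝ) 1 ×ˢ Set.Icc (0:ℝ) 1) \ (Set.Icc (0:ℝ) (t s) ×ˢ Set.Icc (0:ℝ) s) := by
        rintro ⟨u, v⟩ ⟨hp, hgt⟩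
        refine ⟨hp, fun hmem => ?_⟩
        have hle := hgmono u hp.1 (t s) hx v hp.2 s hs hmem.1.2 hmem.2.2
        exact absurd hgt (not_lt.mpr hle)
      have hdiff : volume ((Set.Icc (0:ℝ) 1 ×ˢ Set.Icc (0:ℝ) 1)
          \ (Set.Icc (0:ℝ) (t s) ×ˢ Set.Icc (0:ℝ) s)) = ENNReal.ofReal (1 - t s * s) := by
        rw [measure_diff hrect (measurableSet_Icc.prod measurableSet_Icc).nullMeasurableSet
            (by rw [hvol]; exact ENNReal.mul_ne_top ENNReal.ofReal_ne_top ENNReal.ofReal_ne_top),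
          hvolsq, hvol, ← ENNReal.ofReal_mul hx.1,
          ← ENNReal.ofReal_one, ← ENNReal.ofReal_sub _ (mul_nonneg hx.1 hs.1)]
      have hch : ENNReal.ofReal (1 - m (g (t s) s)) ≤ ENNReal.ofReal (1 - t s * s) := by
        calc ENNReal.ofReal (1 - m (g (t s) s)) ≤ _ := hgconstr _ hr
          _ ≤ _ := measure_mono hsub
          _ = _ := hdiff
      have hts1 : t s * s ≤ 1 := (hq s hs).2
      have hle2 : 1 - m (g (t s) s) ≤ 1 - t s * s :=
        (ENNReal.ofReal_le_ofReal_iff (by linarith)).mp hch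
      have hxs : t s * s ≤ m (g (t s) s) := by linarith
      calc minv (t s * s) ≤ minv (m (g (t s) s)) :=
            hminvmono (hq s hs) (hrm _ hr) hxs
        _ = g (t s) s := hminv.1 hr
    have hint1 : IntervalIntegrable (fun s => minv (t s * s)) volume 0 1 := by
      apply MonotoneOn.intervalIntegrable
      rw [Set.uIcc_of_le zero_le_one]
      intro a ha b hb hab
      exact hminvmono (hq a ha) (hq b hb) (hqmono ha hb hab)
    have hint2 : IntervalIntegrable (fun s => g (t s) s) volume 0 1 := by
      apply MonotoneOn.intervalIntegrable
      rw [Set.uIcc_of_le zero_le_one]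
      intro a ha b hb hab
      exact hgmono (t a) (htmaps a ha) (t b) (htmaps b hb) a ha b hb (htmono ha hb hab) hab
    exact intervalIntegral.integral_mono_on zero_le_one hint1 hint2 hpt
end
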